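/- arXiv:1010.2565 — 6 statements merged into one kernel-verified Lean document; each statement's English description precedes it below -/
import Mathlib

section
/- For an n-by-n Ferrers matrix A = (a_{ij}), the polynomial per(z_j + a_{ij}) in z_1,…,z_n is real stable if and only if the polynomial per(a_{ij} y_j + 1 − a_{ij}) in y_1,…,y_n is real stable. -/
open MvPolynomial

/-- The permanent of a square matrix over a commutative ring. -/
noncomputable def perm {n : ℕ} {R : Type*} [CommRing R]
    (H : Matrix (Fin n) (Fin n) R) : R :=
  ∑ σ : Equiv.Perm (Fin n), ∏ i : Fin n, H i (σ i)

/-- A polynomial `f ∈ ℂ[z_1,…,z_n]` is stable if either `f ≡ 0` or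
`f(w) ≠ 0` whenever all coordinates of `w` have positive imaginary part. -/
def IsStable {σ : Type*} (f : MvPolynomial σ ℂ) : Prop :=
  f = 0 ∨ ∀ w : σ → ℂ, (∀ j, 0 < (w j).im) → MvPolynomial.eval w f ≠ 0

/-- A real polynomial is real stable if it is stable as a complex polynomial. -/
def RealStable {σ : Type*} (f : MvPolynomial σ ℝ) : Prop :=
  IsStable (MvPolynomial.map (algebraMap ℝ ℂ) f)

/-- A Ferrers matrix: a `{0,1}`-matrix weakly decreasing down columns and
weakly increasing from left to right across rows. -/
def Ferrers {m n : ℕ} (A : Matrix (Fin m) (Fin n) ℝ) : Prop :=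
  (∀ i j, A i j = 0 ∨ A i j = 1) ∧
  (∀ i i' j, i ≤ i' → A i' j ≤ A i j) ∧
  (∀ i j j', j ≤ j' → A i j ≤ A i j')

namespace ZStableAux

variable {n : ℕ} (A : Matrix (Fin n) (Fin n) ℝ)

lemma evalF (w : Fin n → ℂ) :
    eval w (map (algebraMap ℝ ℂ)
      (perm fun i j => (X j : MvPolynomial (Fin n) ℝ) + C (A i j))) =
    ∑ σ : Equiv.Perm (Fin n), ∏ i, (w (σ i) + (A i (σ i) : ℂ)) := by
  simp [perm, map_sum, map_prod]

lemma evalG (w : Fin n → ℂ) :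
    eval w (map (algebraMap ℝ ℂ)
      (perm fun i j => C (A i j) * (X j : MvPolynomial (Fin n) ℝ) + C (1 - A i j))) =
    ∑ σ : Equiv.Perm (Fin n), ∏ i, ((A i (σ i) : ℂ) * w (σ i) + (1 - (A i (σ i) : ℂ))) := by
  simp [perm, map_sum, map_prod]

/-- Key identity: `F(w) = (∏ wⱼ) · G(1 + w⁻¹)` pointwise. -/
lemma key (w : Fin n → ℂ) (hw : ∀ j, w j ≠ 0) :
    (∑ σ : Equiv.Perm (Fin n), ∏ i, (w (σ i) + (A i (σ i) : ℂ))) =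
    (∏ j, w j) * ∑ σ : Equiv.Perm (Fin n), ∏ i,
      ((A i (σ i) : ℂ) * (1 + (w (σ i))⁻¹) + (1 - (A i (σ i) : ℂ))) := by
  rw [Finset.mul_sum]
  refine Finset.sum_congr rfl fun σ _ => ?_
  rw [← Equiv.prod_comp σ w, ← Finset.prod_mul_distrib]
  refine Finset.prod_congr rfl fun i _ => ?_
  have h := hw (σ i)
  field_simp
  ring

/-- Conjugation symmetry of the `G` sum (real coefficients). -/
lemma conjG (y : Fin n → ℂ) :
    (∑ σ : Equiv.Perm (Fin n), ∏ i,
      ((A i (σ i) : ℂ) * (starRingEnd ℂ) (y (σ i)) + (1 - (A i (σ i) : ℂ)))) =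
    (starRingEnd ℂ) (∑ σ : Equiv.Perm (Fin n), ∏ i,
      ((A i (σ i) : ℂ) * y (σ i) + (1 - (A i (σ i) : ℂ)))) := by
  simp [map_sum, map_prod]

lemma ne_zero_of_im_pos {z : ℂ} (h : 0 < z.im) : z ≠ 0 := by
  intro hz; rw [hz] at h; simp at h

lemma im_one_add_inv_neg {z : ℂ} (h : 0 < z.im) : (1 + z⁻¹).im < 0 := by
  have hz : z ≠ 0 := ne_zero_of_im_pos h
  have he : (1 + z⁻¹).im = -z.im / Complex.normSq z := by
    simp [Complex.add_im, Complex.inv_im]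
  rw [he]
  exact div_neg_of_neg_of_pos (by linarith) (Complex.normSq_pos.2 hz)

/-- `F` is nonzero: its evaluation at the all-ones point is positive. -/
lemma hFne (hA : Ferrers A) :
    map (algebraMap ℝ ℂ) (perm fun i j => (X j : MvPolynomial (Fin n) ℝ) + C (A i j)) ≠ 0 := by
  intro h
  have h1 := evalF A (fun _ => (1 : ℂ))
  rw [h] at h1
  simp only [map_zero] at h1
  have h2 : (∑ σ : Equiv.Perm (Fin n), ∏ i : Fin n, ((1:ℂ) + (A i (σ i) : ℂ)))
      = ((∑ σ : Equiv.Perm (Fin n), ∏ i : Fin n, (1 + A i (σ i)) : ℝ) : ℂ) := by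
    push_cast; rfl
  rw [h2] at h1
  rw [eq_comm, Complex.ofReal_eq_zero] at h1
  have hpos : (0:ℝ) < ∑ σ : Equiv.Perm (Fin n), ∏ i : Fin n, (1 + A i (σ i)) := by
    apply Finset.sum_pos
    · intro σ _
      apply Finset.prod_pos
      intro i _
      rcases hA.1 i (σ i) with hh | hh <;> rw [hh] <;> norm_num
    · exact Finset.univ_nonempty
  rw [h1] at hpos
  exact lt_irrefl _ hpos

/-- `G` is nonzero: its evaluation at the all-ones point is `n!`. -/
lemma hGne :
    map (algebraMap ℝ ℂ)
      (perm fun i j => C (A i j) * (X j : MvPolynomial (Fin n) ℝ) + C (1 - A i j)) ≠ 0 := by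
  intro h
  have h1 := evalG A (fun _ => (1 : ℂ))
  rw [h] at h1
  simp only [map_zero] at h1
  have h2 : (∑ σ : Equiv.Perm (Fin n), ∏ i : Fin n,
      ((A i (σ i) : ℂ) * 1 + (1 - (A i (σ i) : ℂ)))) = (Nat.factorial n : ℂ) := by
    have he : ∀ σ : Equiv.Perm (Fin n), ∏ i : Fin n,
        ((A i (σ i) : ℂ) * 1 + (1 - (A i (σ i) : ℂ))) = 1 := fun σ =>
      Finset.prod_eq_one fun i _ => by ring
    rw [Finset.sum_congr rfl fun σ _ => he σ]
    simp [Fintype.card_perm]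
  rw [h2] at h1
  exact Nat.cast_ne_zero.2 (Nat.factorial_ne_zero n) h1.symm

end ZStableAux

open ZStableAux in
/-- For an `n × n` Ferrers matrix `A`, the polynomial `per(z_j + a_{ij})` is real
stable if and only if `per(a_{ij} y_j + 1 - a_{ij})` is real stable. -/
theorem z_stable_iff_y_stable (n : ℕ) (A : Matrix (Fin n) (Fin n) ℝ) (hA : Ferrers A) :
    RealStable (perm (fun i j : Fin n =>
        (MvPolynomial.X j : MvPolynomial (Fin n) ℝ) + MvPolynomial.C (A i j))) ↔
    RealStable (perm (fun i j : Fin n =>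
        MvPolynomial.C (A i j) * (MvPolynomial.X j : MvPolynomial (Fin n) ℝ) +
          MvPolynomial.C (1 - A i j))) := by
  unfold RealStable IsStable
  constructor
  · rintro (h0 | hF)
    · exact absurd h0 (hFne A hA)
    · right
      intro y hy
      rw [evalG]
      -- suppose G(y) = 0; transport to F via conjugation and the key identity
      intro hGy
      set w : Fin n → ℂ := fun j => ((starRingEnd ℂ) (y j) - 1)⁻¹ with hw
      have hwim : ∀ j, 0 < (w j).im := by
        intro j
        have h1 : ((starRingEnd ℂ) (y j) - 1).im = -(y j).im := by
          simp [Complex.sub_im, Complex.conj_im]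
        have hne : (starRingEnd ℂ) (y j) - 1 ≠ 0 := by
          intro hz
          have := congrArg Complex.im hz
          rw [h1] at this
          simp at this
          have := hy j; linarith
        have : (w j).im = (y j).im / Complex.normSq ((starRingEnd ℂ) (y j) - 1) := by
          rw [hw]
          simp only [Complex.inv_im, h1]
          ring_nf
        rw [this]
        exact div_pos (hy j) (Complex.normSq_pos.2 hne)
      have hwne : ∀ j, w j ≠ 0 := fun j => ne_zero_of_im_pos (hwim j)
      have hsub : ∀ j, 1 + (w j)⁻¹ = (starRingEnd ℂ) (y j) := by
        intro j
        rw [hw]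
        simp only [inv_inv]
        ring
      have hFw := hF w hwim
      rw [evalF, key A w hwne] at hFw
      apply hFw
      have : (fun j => 1 + (w j)⁻¹) = fun j => (starRingEnd ℂ) (y j) := funext hsub
      have hGsum : (∑ σ : Equiv.Perm (Fin n), ∏ i,
          ((A i (σ i) : ℂ) * (1 + (w (σ i))⁻¹) + (1 - (A i (σ i) : ℂ)))) = 0 := by
        calc (∑ σ : Equiv.Perm (Fin n), ∏ i,
            ((A i (σ i) : ℂ) * (1 + (w (σ i))⁻¹) + (1 - (A i (σ i) : ℂ))))
            = ∑ σ : Equiv.Perm (Fin n), ∏ i,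
              ((A i (σ i) : ℂ) * (starRingEnd ℂ) (y (σ i)) + (1 - (A i (σ i) : ℂ))) := by
                refine Finset.sum_congr rfl fun σ _ => Finset.prod_congr rfl fun i _ => by
                  rw [hsub]
          _ = (starRingEnd ℂ) (∑ σ : Equiv.Perm (Fin n), ∏ i,
              ((A i (σ i) : ℂ) * y (σ i) + (1 - (A i (σ i) : ℂ)))) := conjG A y
          _ = 0 := by rw [hGy]; simp
      rw [hGsum, mul_zero]
  · rintro (h0 | hG)
    · exact absurd h0 (hGne A)
    · right
      intro w hw
      rw [evalF]
      have hwne : ∀ j, w j ≠ 0 := fun j => ne_zero_of_im_pos (hw j)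
      rw [key A w hwne]
      apply mul_ne_zero
      · exact Finset.prod_ne_zero_iff.2 fun j _ => hwne j
      · set y : Fin n → ℂ := fun j => (starRingEnd ℂ) (1 + (w j)⁻¹) with hy
        have hyim : ∀ j, 0 < (y j).im := by
          intro j
          rw [hy]
          simp only [Complex.conj_im]
          have := im_one_add_inv_neg (hw j)
          linarith
        have hGy := hG y hyim
        rw [evalG] at hGy
        have hcongr : (∑ σ : Equiv.Perm (Fin n), ∏ i,
            ((A i (σ i) : ℂ) * (1 + (w (σ i))⁻¹) + (1 - (A i (σ i) : ℂ)))) =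
            (starRingEnd ℂ) (∑ σ : Equiv.Perm (Fin n), ∏ i,
              ((A i (σ i) : ℂ) * y (σ i) + (1 - (A i (σ i) : ℂ)))) := by
          rw [← conjG A y]
          refine Finset.sum_congr rfl fun σ _ => Finset.prod_congr rfl fun i _ => ?_
          rw [hy]
          simp
        rw [hcongr]
        intro hc
        apply hGy
        have := congrArg (starRingEnd ℂ) hc
        simpa [Complex.conj_conj] using this
end

section
/- Let A = (a_{ij}) be an n-by-n Ferrers matrix with a_{nn} = 0, let k ≥ 1 be the number of 0's in the last column of A, and let A° be the (n−1)-by-(n−1) matrix obtained from A by deleting its last row and last column. Then per(B(A)) = k·x_n·per(B(A°)) + x_n·y_n·∂ per(B(A°)), where ∂ = Σ_{i=1}^{n−k} ∂/∂x_i + Σ_{j=1}^{n−1} ∂/∂y_j. -/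
open MvPolynomial

/-- The matrix `B(A;x;y)` with entries `b_{ij} = a_{ij} y_j + (1 - a_{ij}) x_i`,
where `Sum.inl i` is the row variable `x_i` and `Sum.inr j` is the column
variable `y_j`. -/
noncomputable def Bmat {m n : ℕ} (A : Matrix (Fin m) (Fin n) ℝ) :
    Matrix (Fin m) (Fin n) (MvPolynomial (Fin m ⊕ Fin n) ℝ) :=
  fun i j => MvPolynomial.C (A i j) * MvPolynomial.X (Sum.inr j) +
    MvPolynomial.C (1 - A i j) * MvPolynomial.X (Sum.inl i)

/-! ### Auxiliary machinery -/

/-- The equivalence `Fin (m+1) × Perm (Fin m) ≃ Perm (Fin (m+1))` recording the image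
of the last element. -/
noncomputable def myE (m : ℕ) : (Fin (m+1) × Equiv.Perm (Fin m)) ≃ Equiv.Perm (Fin (m+1)) :=
  ((Equiv.prodCongr (Fin.revPerm : Fin (m+1) ≃ Fin (m+1))
      (Equiv.permCongr (Fin.revPerm : Fin m ≃ Fin m))).trans
    Equiv.Perm.decomposeFin.symm).trans
    (Equiv.permCongr (Fin.revPerm : Fin (m+1) ≃ Fin (m+1)))

lemma rev_swap {n : ℕ} (a b x : Fin n) :
    Fin.rev (Equiv.swap a b x) = Equiv.swap a.rev b.rev x.rev := by
  rcases eq_or_ne x a with rfl | hxa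
  · simp
  · rcases eq_or_ne x b with rfl | hxb
    · simp
    · rw [Equiv.swap_apply_of_ne_of_ne hxa hxb,
        Equiv.swap_apply_of_ne_of_ne (fun h => hxa (Fin.rev_injective h))
          (fun h => hxb (Fin.rev_injective h))]

lemma myE_last (m : ℕ) (j : Fin (m+1)) (τ : Equiv.Perm (Fin m)) :
    myE m (j, τ) (Fin.last m) = j := by
  simp only [myE, Equiv.trans_apply, Equiv.permCongr_apply, Equiv.prodCongr_apply,
    Fin.revPerm_symm, Fin.revPerm_apply, Prod.map, Fin.rev_last,
    Equiv.Perm.decomposeFin_symm_apply_zero, Fin.rev_rev]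

lemma myE_castSucc (m : ℕ) (j : Fin (m+1)) (τ : Equiv.Perm (Fin m)) (i : Fin m) :
    myE m (j, τ) i.castSucc = Equiv.swap (Fin.last m) j ((τ i).castSucc) := by
  simp only [myE, Equiv.trans_apply, Equiv.permCongr_apply, Equiv.prodCongr_apply,
    Fin.revPerm_symm, Fin.revPerm_apply, Prod.map, Fin.rev_castSucc,
    Equiv.Perm.decomposeFin_symm_apply_succ, Fin.rev_rev]
  rw [rev_swap, Fin.rev_succ, Fin.rev_rev, Fin.rev_rev, ← Fin.rev_last m, Fin.rev_rev]

lemma pderiv_finset_prod {R σ ι : Type*} [CommSemiring R] [DecidableEq σ] [DecidableEq ι]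
    (v : σ) (s : Finset ι) (f : ι → MvPolynomial σ R) :
    MvPolynomial.pderiv v (∏ i ∈ s, f i) =
      ∑ i ∈ s, MvPolynomial.pderiv v (f i) * ∏ j ∈ s.erase i, f j := by
  induction s using Finset.induction_on with
  | empty => simp
  | @insert a s ha ih =>
    rw [Finset.prod_insert ha, MvPolynomial.pderiv_mul, ih, Finset.sum_insert ha,
      Finset.erase_insert ha, Finset.mul_sum]
    congr 1
    refine Finset.sum_congr rfl fun i hi => ?_
    rw [Finset.erase_insert_of_ne (by rintro rfl; exact ha hi),
      Finset.prod_insert (fun h => ha (Finset.mem_of_mem_erase h))]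
    ring

lemma card_filter_lt (m t : ℕ) (ht : t ≤ m) :
    (Finset.univ.filter (fun i : Fin m => (i : ℕ) < t)).card = t := by
  have h : Finset.univ.filter (fun i : Fin m => (i : ℕ) < t) =
      Finset.map (Fin.castLEEmb ht) Finset.univ := by
    ext i
    simp only [Finset.mem_filter, Finset.mem_univ, true_and, Finset.mem_map,
      Fin.castLEEmb, Function.Embedding.coeFn_mk]
    constructor
    · intro hi
      exact ⟨⟨(i : ℕ), hi⟩, by ext; simp [Fin.castLE]⟩
    · rintro ⟨a, rfl⟩
      simp [Fin.castLE]
  rw [h, Finset.card_map, Finset.card_univ, Fintype.card_fin]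

/-- Permanent expansion along the last row, when the last row is constant. -/
lemma perm_expand {R : Type*} [CommRing R] {m : ℕ} (b : Matrix (Fin (m+1)) (Fin (m+1)) R)
    (x : R) (hx : ∀ j, b (Fin.last m) j = x) :
    perm b = (∑ τ : Equiv.Perm (Fin m), ∏ i : Fin m, b i.castSucc ((τ i).castSucc)) * x +
      (∑ τ : Equiv.Perm (Fin m), ∑ i' : Fin m,
        b i'.castSucc (Fin.last m) *
          ∏ i ∈ Finset.univ.erase i', b i.castSucc ((τ i).castSucc)) * x := by
  rw [perm, ← Equiv.sum_comp (myE m) (fun σ => ∏ i, b i (σ i)), Fintype.sum_prod_type]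
  rw [Fin.sum_univ_castSucc
    (f := fun j => ∑ τ : Equiv.Perm (Fin m), ∏ i, b i ((myE m (j, τ)) i))]
  rw [add_comm]
  congr 1
  · -- j = last part
    rw [Finset.sum_mul]
    refine Finset.sum_congr rfl fun τ _ => ?_
    rw [Fin.prod_univ_castSucc, myE_last, hx]
    congr 1
    refine Finset.prod_congr rfl fun i _ => ?_
    rw [myE_castSucc, Equiv.swap_self, Equiv.refl_apply]
  · -- j = castSucc part
    rw [Finset.sum_comm, Finset.sum_mul]
    refine Finset.sum_congr rfl fun τ _ => ?_
    rw [Finset.sum_mul,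
      ← Equiv.sum_comp τ.symm (fun i' => (b i'.castSucc (Fin.last m) *
        ∏ i ∈ Finset.univ.erase i', b i.castSucc ((τ i).castSucc)) * x)]
    refine Finset.sum_congr rfl fun j₀ _ => ?_
    rw [Fin.prod_univ_castSucc, myE_last, hx]
    congr 1
    rw [← Finset.mul_prod_erase Finset.univ
      (fun i => b i.castSucc ((myE m (j₀.castSucc, τ)) i.castSucc))
      (Finset.mem_univ (τ.symm j₀))]
    congr 1
    · rw [myE_castSucc, Equiv.apply_symm_apply, Equiv.swap_apply_right]
    · refine Finset.prod_congr rfl fun i hi => ?_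
      rw [myE_castSucc, Equiv.swap_apply_of_ne_of_ne (Fin.castSucc_lt_last _).ne ?_]
      intro h
      rw [Fin.castSucc_inj] at h
      exact (Finset.mem_erase.mp hi).1 (by rw [← h, Equiv.symm_apply_apply])

set_option maxHeartbeats 1600000 in
/-- Differential recurrence: if `A` is an `n × n` Ferrers matrix (`n = m+1`)
with `a_{nn} = 0`, `k` is the number of `0`'s in the last column of `A`, and
`A°` is obtained from `A` by deleting the last row and column, then
`per(B(A)) = k xₙ per(B(A°)) + xₙ yₙ ∂ per(B(A°))`, where
`∂ = Σ_{i=1}^{n-k} ∂/∂x_i + Σ_{j=1}^{n-1} ∂/∂y_j`. -/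
theorem diff_recurrence (m : ℕ) (A : Matrix (Fin (m + 1)) (Fin (m + 1)) ℝ)
    (hA : Ferrers A) (hlast : A (Fin.last m) (Fin.last m) = 0)
    (k : ℕ)
    (hk : k = (Finset.univ.filter (fun i : Fin (m + 1) => A i (Fin.last m) = 0)).card)
    (hk1 : 1 ≤ k)
    (P : MvPolynomial (Fin (m + 1) ⊕ Fin (m + 1)) ℝ)
    (hP : P = MvPolynomial.rename (Sum.map Fin.castSucc Fin.castSucc)
      (perm (Bmat (fun i j : Fin m => A i.castSucc j.castSucc)))) :
    perm (Bmat A) =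
      (k : MvPolynomial (Fin (m + 1) ⊕ Fin (m + 1)) ℝ) *
          MvPolynomial.X (Sum.inl (Fin.last m)) * P +
        MvPolynomial.X (Sum.inl (Fin.last m)) * MvPolynomial.X (Sum.inr (Fin.last m)) *
          ((∑ i ∈ Finset.univ.filter (fun i : Fin (m + 1) => (i : ℕ) < m + 1 - k),
              MvPolynomial.pderiv (Sum.inl i) P) +
            ∑ j : Fin m, MvPolynomial.pderiv (Sum.inr j.castSucc) P) := by
  obtain ⟨h01, hcolm, hrowm⟩ := hA
  -- the last row of A is zero
  have hrow0 : ∀ j, A (Fin.last m) j = 0 := by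
    intro j
    have h1 := hrowm (Fin.last m) j (Fin.last m) (Fin.le_last j)
    rcases h01 (Fin.last m) j with h | h
    · exact h
    · rw [h, hlast] at h1; linarith
  have hkle : k ≤ m + 1 := by
    rw [hk]
    exact (Finset.card_filter_le _ _).trans (by simp)
  have hupward : ∀ i i' : Fin (m+1), i ≤ i' →
      A i (Fin.last m) = 0 → A i' (Fin.last m) = 0 := by
    intro i i' h hi
    have h2 := hcolm i i' (Fin.last m) h
    rcases h01 i' (Fin.last m) with h' | h'
    · exact h'
    · rw [h', hi] at h2; linarith
  have hcol0 : ∀ i : Fin (m+1), m + 1 - k ≤ (i : ℕ) → A i (Fin.last m) = 0 := by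
    intro i hi
    by_contra hne
    have hsub : Finset.univ.filter (fun i' : Fin (m+1) => A i' (Fin.last m) = 0) ⊆
        Finset.Ioi i := by
      intro i' hi'
      simp only [Finset.mem_filter] at hi'
      rw [Finset.mem_Ioi]
      by_contra hle
      push_neg at hle
      exact hne (hupward i' i hle hi'.2)
    have hcard := Finset.card_le_card hsub
    rw [← hk, Fin.card_Ioi] at hcard
    omega
  have hcol1 : ∀ i : Fin (m+1), (i : ℕ) < m + 1 - k → A i (Fin.last m) = 1 := by
    intro i hi
    rcases h01 i (Fin.last m) with h | h
    · exfalso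
      have hsub : Finset.Ici i ⊆
          Finset.univ.filter (fun i' : Fin (m+1) => A i' (Fin.last m) = 0) := by
        intro i' hi'
        rw [Finset.mem_Ici] at hi'
        simp only [Finset.mem_filter, Finset.mem_univ, true_and]
        exact hupward i i' hi' h
      have hcard := Finset.card_le_card hsub
      rw [← hk, Fin.card_Ici] at hcard
      omega
    · exact h
  -- notation
  have hblast : ∀ j, Bmat A (Fin.last m) j = MvPolynomial.X (Sum.inl (Fin.last m)) := by
    intro j
    simp [Bmat, hrow0 j]
  have hPalt : P = ∑ τ : Equiv.Perm (Fin m), ∏ i : Fin m,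
      Bmat A i.castSucc ((τ i).castSucc) := by
    rw [hP, perm, map_sum]
    refine Finset.sum_congr rfl fun τ _ => ?_
    rw [map_prod]
    refine Finset.prod_congr rfl fun i _ => ?_
    simp [Bmat]
  -- the key pointwise identity
  have key : ∀ (τ : Equiv.Perm (Fin m)) (i' : Fin m),
      Bmat A i'.castSucc (Fin.last m) *
          ∏ i ∈ Finset.univ.erase i', Bmat A i.castSucc ((τ i).castSucc) =
        (if (i' : ℕ) < m + 1 - k then 0
          else ∏ i : Fin m, Bmat A i.castSucc ((τ i).castSucc)) +
        MvPolynomial.X (Sum.inr (Fin.last m)) *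
          (((if (i' : ℕ) < m + 1 - k then
              MvPolynomial.C (1 - A i'.castSucc ((τ i').castSucc)) else 0) +
            MvPolynomial.C (A i'.castSucc ((τ i').castSucc))) *
            ∏ i ∈ Finset.univ.erase i', Bmat A i.castSucc ((τ i).castSucc)) := by
    intro τ i'
    by_cases hlt : (i' : ℕ) < m + 1 - k
    · have h1 : A i'.castSucc (Fin.last m) = 1 := hcol1 _ (by simpa using hlt)
      rw [if_pos hlt, if_pos hlt]
      have hb : Bmat A i'.castSucc (Fin.last m) =
          MvPolynomial.X (Sum.inr (Fin.last m)) := by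
        simp [Bmat, h1]
      rw [hb, zero_add, ← MvPolynomial.C_add, sub_add_cancel, MvPolynomial.C_1, one_mul]
    · have h0 : A i'.castSucc (Fin.last m) = 0 := hcol0 _ (by simp; omega)
      have ha0 : A i'.castSucc ((τ i').castSucc) = 0 := by
        have h2 := hrowm i'.castSucc ((τ i').castSucc) (Fin.last m) (Fin.le_last _)
        rcases h01 i'.castSucc ((τ i').castSucc) with h | h
        · exact h
        · rw [h, h0] at h2; linarith
      rw [if_neg hlt, if_neg hlt]
      have hb : Bmat A i'.castSucc (Fin.last m) =
          MvPolynomial.X (Sum.inl i'.castSucc) := by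
        simp [Bmat, h0]
      have hc : Bmat A i'.castSucc ((τ i').castSucc) =
          MvPolynomial.X (Sum.inl i'.castSucc) := by
        simp [Bmat, ha0]
      rw [hb, ha0, MvPolynomial.C_0, zero_add, zero_mul, mul_zero, add_zero, ← hc]
      have e := Finset.mul_prod_erase Finset.univ
        (fun i => Bmat A i.castSucc ((τ i).castSucc)) (Finset.mem_univ i')
      simpa using e
  -- derivative computations
  have hDx : (∑ v ∈ Finset.univ.filter (fun i : Fin (m + 1) => (i : ℕ) < m + 1 - k),
      MvPolynomial.pderiv (Sum.inl v) P) =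
      ∑ τ : Equiv.Perm (Fin m), ∑ i' : Fin m,
        (if (i' : ℕ) < m + 1 - k then
            MvPolynomial.C (1 - A i'.castSucc ((τ i').castSucc)) else 0) *
          ∏ i ∈ Finset.univ.erase i', Bmat A i.castSucc ((τ i).castSucc) := by
    have h1 : ∀ v : Fin (m+1), MvPolynomial.pderiv (Sum.inl v) P =
        ∑ τ : Equiv.Perm (Fin m), ∑ i' : Fin m,
          (if i'.castSucc = v then
              MvPolynomial.C (1 - A i'.castSucc ((τ i').castSucc)) else 0) *
            ∏ i ∈ Finset.univ.erase i', Bmat A i.castSucc ((τ i).castSucc) := by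
      intro v
      rw [hPalt, map_sum]
      refine Finset.sum_congr rfl fun τ _ => ?_
      rw [pderiv_finset_prod]
      refine Finset.sum_congr rfl fun i' _ => ?_
      congr 1
      simp [Bmat, MvPolynomial.pderiv_X, Pi.single_apply, MvPolynomial.pderiv_C_mul]
    rw [Finset.sum_congr rfl fun v _ => h1 v, Finset.sum_comm]
    refine Finset.sum_congr rfl fun τ _ => ?_
    rw [Finset.sum_comm]
    refine Finset.sum_congr rfl fun i' _ => ?_
    rw [← Finset.sum_mul]
    congr 1
    rw [Finset.sum_ite_eq]
    simp
  have hDy : (∑ j : Fin m, MvPolynomial.pderiv (Sum.inr j.castSucc) P) =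
      ∑ τ : Equiv.Perm (Fin m), ∑ i' : Fin m,
        MvPolynomial.C (A i'.castSucc ((τ i').castSucc)) *
          ∏ i ∈ Finset.univ.erase i', Bmat A i.castSucc ((τ i).castSucc) := by
    have h1 : ∀ j₀ : Fin m, MvPolynomial.pderiv (Sum.inr j₀.castSucc) P =
        ∑ τ : Equiv.Perm (Fin m), ∑ i' : Fin m,
          (if τ i' = j₀ then
              MvPolynomial.C (A i'.castSucc ((τ i').castSucc)) else 0) *
            ∏ i ∈ Finset.univ.erase i', Bmat A i.castSucc ((τ i).castSucc) := by
      intro j₀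
      rw [hPalt, map_sum]
      refine Finset.sum_congr rfl fun τ _ => ?_
      rw [pderiv_finset_prod]
      refine Finset.sum_congr rfl fun i' _ => ?_
      congr 1
      simp [Bmat, MvPolynomial.pderiv_X, Pi.single_apply, MvPolynomial.pderiv_C_mul,
        Fin.castSucc_inj]
    rw [Finset.sum_congr rfl fun j₀ _ => h1 j₀, Finset.sum_comm]
    refine Finset.sum_congr rfl fun τ _ => ?_
    rw [Finset.sum_comm]
    refine Finset.sum_congr rfl fun i' _ => ?_
    rw [← Finset.sum_mul]
    congr 1
    rw [Finset.sum_ite_eq]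
    simp
  -- cardinality of the complementary filter
  have hcardG : (Finset.univ.filter (fun i' : Fin m => ¬ (i' : ℕ) < m + 1 - k)).card
      = k - 1 := by
    have h1 := card_filter_lt m (m + 1 - k) (by omega)
    have h2 := Finset.card_filter_add_card_filter_not
      (s := (Finset.univ : Finset (Fin m))) (fun i' : Fin m => (i' : ℕ) < m + 1 - k)
    rw [Finset.card_univ, Fintype.card_fin, h1] at h2
    omega
  -- the main reduction of the second sum
  have hS : (∑ τ : Equiv.Perm (Fin m), ∑ i' : Fin m,
        Bmat A i'.castSucc (Fin.last m) *
          ∏ i ∈ Finset.univ.erase i', Bmat A i.castSucc ((τ i).castSucc)) =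
      ((k - 1 : ℕ) : MvPolynomial (Fin (m + 1) ⊕ Fin (m + 1)) ℝ) * P +
        MvPolynomial.X (Sum.inr (Fin.last m)) *
          ((∑ v ∈ Finset.univ.filter (fun i : Fin (m + 1) => (i : ℕ) < m + 1 - k),
              MvPolynomial.pderiv (Sum.inl v) P) +
            ∑ j : Fin m, MvPolynomial.pderiv (Sum.inr j.castSucc) P) := by
    rw [hDx, hDy]
    rw [Finset.sum_congr rfl fun τ _ => Finset.sum_congr rfl fun i' _ => key τ i']
    rw [Finset.sum_congr rfl fun (τ : Equiv.Perm (Fin m)) _ => Finset.sum_add_distrib,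
      Finset.sum_add_distrib]
    congr 1
    · -- constant part
      have h3 : ∀ τ : Equiv.Perm (Fin m),
          (∑ i' : Fin m, if (i' : ℕ) < m + 1 - k then 0
            else ∏ i : Fin m, Bmat A i.castSucc ((τ i).castSucc)) =
          ((k - 1 : ℕ) : MvPolynomial (Fin (m + 1) ⊕ Fin (m + 1)) ℝ) *
            ∏ i : Fin m, Bmat A i.castSucc ((τ i).castSucc) := by
        intro τ
        rw [Finset.sum_ite, Finset.sum_const_zero, zero_add, Finset.sum_const, hcardG,
          nsmul_eq_mul]
      rw [Finset.sum_congr rfl fun τ _ => h3 τ, ← Finset.mul_sum, ← hPalt]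
    · -- derivative part
      rw [← Finset.sum_add_distrib, Finset.mul_sum]
      refine Finset.sum_congr rfl fun τ _ => ?_
      rw [← Finset.sum_add_distrib, Finset.mul_sum]
      refine Finset.sum_congr rfl fun i' _ => ?_
      ring
  -- final assembly
  rw [perm_expand (Bmat A) (MvPolynomial.X (Sum.inl (Fin.last m))) hblast, ← hPalt, hS]
  have hcast : ((k - 1 : ℕ) : MvPolynomial (Fin (m + 1) ⊕ Fin (m + 1)) ℝ)
      = (k : MvPolynomial (Fin (m + 1) ⊕ Fin (m + 1)) ℝ) - 1 := by
    rw [Nat.cast_sub hk1, Nat.cast_one]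
  rw [hcast]
  ring
end

section
/- Let f(z_1,…,z_n,t) ∈ ℂ[z_1,…,z_n,t] be stable, and write f(z,t) = Σ_{k=0}^d f_k(z) t^k with f_d not identically zero (so d = deg_t(f)). Then f_k(z_1,…,z_n) is stable for every 0 ≤ k ≤ d. -/
open MvPolynomial

/-- Sum of a nonempty multiset of negative reals is negative. -/
lemma multiset_sum_neg (s : Multiset ℝ) (h : ∀ x ∈ s, x < 0) (hs : s ≠ 0) : s.sum < 0 := by
  induction s using Multiset.induction with
  | empty => exact absurd rfl hs
  | cons a t ih =>
    rw [Multiset.sum_cons]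
    rcases eq_or_ne t 0 with rfl | ht
    · simpa using h a (by simp)
    · have := ih (fun x hx => h x (Multiset.mem_cons_of_mem hx)) ht
      have ha := h a (Multiset.mem_cons_self a t)
      linarith

lemma log_deriv_aux (t : ℂ) : ∀ (R : Multiset ℂ), (∀ r ∈ R, t - r ≠ 0) →
    Polynomial.eval t (Polynomial.derivative (R.map (fun a => Polynomial.X - Polynomial.C a)).prod)
      = Polynomial.eval t ((R.map (fun a => Polynomial.X - Polynomial.C a)).prod)
        * (R.map (fun r => (t - r)⁻¹)).sum := by
  intro R
  induction R using Multiset.induction with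
  | empty => simp
  | cons a s ih =>
    intro hR
    have ha : t - a ≠ 0 := hR a (Multiset.mem_cons_self a s)
    have hs : ∀ r ∈ s, t - r ≠ 0 := fun r hr => hR r (Multiset.mem_cons_of_mem hr)
    simp only [Multiset.map_cons, Multiset.prod_cons, Multiset.sum_cons,
      Polynomial.derivative_mul, Polynomial.derivative_sub, Polynomial.derivative_X,
      Polynomial.derivative_C, sub_zero, one_mul, Polynomial.eval_add, Polynomial.eval_mul,
      Polynomial.eval_sub, Polynomial.eval_X, Polynomial.eval_C, ih hs]
    field_simp


lemma gauss_lucas (p : Polynomial ℂ) (hdeg : 0 < p.natDegree)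
    (hst : ∀ t : ℂ, 0 < t.im → Polynomial.eval t p ≠ 0) :
    ∀ t : ℂ, 0 < t.im → Polynomial.eval t (Polynomial.derivative p) ≠ 0 := by
  intro t ht
  have hp0 : p ≠ 0 := fun h => by simp [h] at hdeg
  have hcard : p.roots.card = p.natDegree :=
    (Polynomial.splits_iff_card_roots).mp (IsAlgClosed.splits p)
  have hfact := Polynomial.C_leadingCoeff_mul_prod_multiset_X_sub_C hcard
  -- every root has nonpositive imaginary part
  have hroot : ∀ r ∈ p.roots, t - r ≠ 0 ∧ 0 < (t - r).im := by
    intro r hr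
    have : ¬ (0 < r.im) := fun h => hst r h (Polynomial.isRoot_of_mem_roots hr)
    have him : 0 < (t - r).im := by
      rw [Complex.sub_im]; linarith [not_lt.mp this]
    exact ⟨fun h0 => by rw [h0] at him; simp at him, him⟩
  set R := p.roots with hR
  set Q := (R.map (fun a => Polynomial.X - Polynomial.C a)).prod with hQ
  have hkey : Polynomial.eval t (Polynomial.derivative Q)
      = Polynomial.eval t Q * (R.map (fun r => (t - r)⁻¹)).sum :=
    log_deriv_aux t R (fun r hr => (hroot r hr).1)
  have hQne : Polynomial.eval t Q ≠ 0 := by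
    rw [hQ, Polynomial.eval_multiset_prod, Multiset.map_map]
    refine Multiset.prod_ne_zero ?_
    simp only [Multiset.mem_map, Function.comp]
    rintro ⟨r, hr, h0⟩
    simp only [Polynomial.eval_sub, Polynomial.eval_X, Polynomial.eval_C] at h0
    exact (hroot r hr).1 h0
  have hSne : (R.map (fun r => (t - r)⁻¹)).sum ≠ 0 := by
    intro h0
    have him : ((R.map (fun r => (t - r)⁻¹)).sum).im < 0 := by
      have : ((R.map (fun r => (t - r)⁻¹)).sum).im
          = ((R.map (fun r => (t - r)⁻¹)).map Complex.im).sum := by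
        refine (AddMonoidHom.map_multiset_sum (AddMonoidHom.mk' Complex.im ?_) _)
        intro x y; exact Complex.add_im x y
      rw [this, Multiset.map_map]
      refine multiset_sum_neg _ ?_ ?_
      · simp only [Multiset.mem_map, Function.comp]
        rintro x ⟨r, hr, rfl⟩
        rw [Complex.inv_im]
        have := (hroot r hr).2
        have hns : 0 < Complex.normSq (t - r) := by
          rw [Complex.normSq_pos]; exact (hroot r hr).1
        exact div_neg_of_neg_of_pos (by linarith) hns
      · simp only [ne_eq, Multiset.map_eq_zero, Multiset.map_eq_zero]
        intro h
        rw [h] at hcard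
        simp at hcard
        omega
    rw [h0] at him; simp at him
  have hd : Polynomial.derivative p = Polynomial.C p.leadingCoeff * Polynomial.derivative Q := by
    conv_lhs => rw [← hfact]
    rw [Polynomial.derivative_C_mul]
  rw [hd, Polynomial.eval_mul, Polynomial.eval_C, hkey]
  exact mul_ne_zero (Polynomial.leadingCoeff_ne_zero.mpr hp0) (mul_ne_zero hQne hSne)


lemma gauss_lucas_iter (p : Polynomial ℂ)
    (hst : ∀ t : ℂ, 0 < t.im → Polynomial.eval t p ≠ 0) :
    ∀ k, k ≤ p.natDegree →
      (Polynomial.derivative^[k] p).natDegree = p.natDegree - k ∧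
      (∀ t : ℂ, 0 < t.im → Polynomial.eval t (Polynomial.derivative^[k] p) ≠ 0) := by
  intro k
  induction k with
  | zero => exact fun _ => ⟨by simp, by simpa using hst⟩
  | succ k ih =>
    intro hk
    obtain ⟨hdeg, hnv⟩ := ih (Nat.le_of_succ_le hk)
    have hpos : 0 < (Polynomial.derivative^[k] p).natDegree := by omega
    constructor
    · rw [Function.iterate_succ_apply']
      have := Polynomial.degree_derivative_eq (Polynomial.derivative^[k] p) hpos
      have h2 := Polynomial.natDegree_eq_of_degree_eq_some this
      rw [h2, hdeg]
      omega
    · rw [Function.iterate_succ_apply']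
      exact gauss_lucas _ hpos hnv

/-- Hurwitz-type statement via the minimum modulus principle. -/
lemma hurwitz_contra (u : ℂ → ℂ) (hu : Differentiable ℂ u) (r : ℝ) (hr : 0 < r)
    (hsph : ∀ s ∈ Metric.sphere (0:ℂ) r, u s ≠ 0)
    (happrox : ∀ δ > (0:ℝ), ∃ v : ℂ → ℂ, Differentiable ℂ v ∧
      (∀ s ∈ Metric.closedBall (0:ℂ) r, v s ≠ 0) ∧
      ∀ s ∈ Metric.closedBall (0:ℂ) r, ‖v s - u s‖ ≤ δ) :
    u 0 ≠ 0 := by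
  have hsne : (Metric.sphere (0:ℂ) r).Nonempty := NormedSpace.sphere_nonempty.mpr hr.le
  obtain ⟨s₀, hs₀, hmin'⟩ := (isCompact_sphere (0:ℂ) r).exists_isMinOn hsne
    (continuous_norm.comp hu.continuous).continuousOn
  have hmin : ∀ s ∈ Metric.sphere (0:ℂ) r, ‖u s₀‖ ≤ ‖u s‖ := fun s hs => hmin' hs
  set μ := ‖u s₀‖ with hμ
  have hμpos : 0 < μ := norm_pos_iff.mpr (hsph s₀ hs₀)
  obtain ⟨v, hv, hvne, hvclose⟩ := happrox (μ/3) (by linarith)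
  -- on the sphere, ‖v‖ ≥ 2μ/3
  have hvsph : ∀ s ∈ Metric.sphere (0:ℂ) r, 2*μ/3 ≤ ‖v s‖ := by
    intro s hs
    have h1 : μ ≤ ‖u s‖ := hmin s hs
    have h2 : ‖v s - u s‖ ≤ μ/3 := hvclose s (Metric.sphere_subset_closedBall hs)
    have := norm_sub_norm_le (v s) (u s)
    have := norm_sub_rev (v s) (u s)
    have h3 : ‖u s‖ - ‖v s‖ ≤ ‖u s - v s‖ := norm_sub_norm_le _ _
    rw [norm_sub_rev] at h2
    linarith
  -- minimum modulus: ‖v 0‖ ≥ 2μ/3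
  have hmm : 2*μ/3 ≤ ‖v 0‖ := by
    have hvinv : DifferentiableOn ℂ (fun s => (v s)⁻¹) (Metric.closedBall (0:ℂ) r) :=
      (hv.differentiableOn).inv hvne
    have hdc : DiffContOnCl ℂ (fun s => (v s)⁻¹) (Metric.ball (0:ℂ) r) := by
      refine DifferentiableOn.diffContOnCl ?_
      rwa [closure_ball (0:ℂ) hr.ne']
    have hbd : Bornology.IsBounded (Metric.ball (0:ℂ) r) := Metric.isBounded_ball
    have hfr : ∀ z ∈ frontier (Metric.ball (0:ℂ) r), ‖(v z)⁻¹‖ ≤ (2*μ/3)⁻¹ := by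
      rw [frontier_ball (0:ℂ) hr.ne']
      intro z hz
      rw [norm_inv]
      exact inv_anti₀ (by linarith) (hvsph z hz)
    have h0 : (0:ℂ) ∈ closure (Metric.ball (0:ℂ) r) := by
      rw [closure_ball (0:ℂ) hr.ne']
      exact Metric.mem_closedBall_self hr.le
    have := Complex.norm_le_of_forall_mem_frontier_norm_le hbd hdc hfr h0
    rw [norm_inv] at this
    have hv0 : v 0 ≠ 0 := hvne 0 (Metric.mem_closedBall_self hr.le)
    have hv0' : 0 < ‖v 0‖ := norm_pos_iff.mpr hv0
    rw [inv_le_inv₀ hv0' (by linarith)] at this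
    linarith
  have h2 : ‖v 0 - u 0‖ ≤ μ/3 := hvclose 0 (Metric.mem_closedBall_self hr.le)
  intro h0
  rw [h0, sub_zero] at h2
  linarith


lemma exists_poly_line (n : ℕ) (h : MvPolynomial (Fin n) ℂ) (a b : Fin n → ℂ) :
    ∃ P : Polynomial ℂ, ∀ s : ℂ,
      Polynomial.eval s P = eval (fun j => a j + s * b j) h := by
  refine ⟨MvPolynomial.aeval (fun j => Polynomial.C (a j) + Polynomial.C (b j) * Polynomial.X) h,
    fun s => ?_⟩
  induction h using MvPolynomial.induction_on with
  | C c => simp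
  | add p q hp hq => simp [hp, hq]
  | mul_X p j hp =>
    rw [map_mul, Polynomial.eval_mul, hp, eval_mul]
    simp
    exact Or.inl (mul_comm _ _)

lemma eval_option (n : ℕ) (f : MvPolynomial (Option (Fin n)) ℂ) (z : Fin n → ℂ) (t : ℂ) :
    eval (fun o => o.elim t z) f
      = Polynomial.eval t (Polynomial.map (eval z) (optionEquivLeft ℂ (Fin n) f)) := by
  induction f using MvPolynomial.induction_on with
  | C c => simp [optionEquivLeft_C]
  | add p q hp hq => simp [map_add, hp, hq]
  | mul_X p o hp =>
    rw [map_mul (optionEquivLeft ℂ (Fin n)), Polynomial.map_mul, Polynomial.eval_mul, ← hp, eval_mul]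
    congr 1
    cases o with
    | none => simp [optionEquivLeft_X_none]
    | some j => simp [optionEquivLeft_X_some]


lemma main_hurwitz (n : ℕ) (h : MvPolynomial (Fin n) ℂ) (hh : h ≠ 0)
    (N : ℕ) (e : ℕ → MvPolynomial (Fin n) ℂ)
    (happrox : ∀ δ > (0:ℝ), ∃ c : ℕ → ℂ, (∀ i < N, ‖c i‖ ≤ δ) ∧
       ∀ z : Fin n → ℂ, (∀ j, 0 < (z j).im) →
         eval z h + ∑ i ∈ Finset.range N, c i * eval z (e i) ≠ 0) :
    ∀ z : Fin n → ℂ, (∀ j, 0 < (z j).im) → eval z h ≠ 0 := by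
  intro z₀ hz₀ hcontra
  -- a point where h does not vanish
  have hz₁ : ∃ z₁ : Fin n → ℂ, eval z₁ h ≠ 0 := by
    by_contra hc
    push_neg at hc
    exact hh (MvPolynomial.funext (fun x => by rw [hc x, map_zero]))
  obtain ⟨z₁, hz₁⟩ := hz₁
  set b : Fin n → ℂ := fun j => z₁ j - z₀ j with hb
  set line : ℂ → (Fin n → ℂ) := fun s j => z₀ j + s * b j with hline
  obtain ⟨P, hP⟩ := exists_poly_line n h z₀ b
  set u : ℂ → ℂ := fun s => Polynomial.eval s P with hu
  have hu_line : ∀ s, u s = eval (line s) h := fun s => hP s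
  have hudiff : Differentiable ℂ u := P.differentiable
  have hu0 : u 0 = 0 := by rw [hu_line]; simpa [hline] using hcontra
  have hu1 : u 1 ≠ 0 := by
    rw [hu_line]
    have : line 1 = z₁ := by funext j; simp [hline, hb]
    rwa [this]
  -- the set of s where line s is in the upper half space is open and contains 0
  have hopen : IsOpen {s : ℂ | ∀ j, 0 < (line s j).im} := by
    rw [Set.setOf_forall]
    refine isOpen_iInter_of_finite (fun j => ?_)
    exact isOpen_lt continuous_const
      (Complex.continuous_im.comp (continuous_const.add (continuous_id.mul continuous_const)))
  have h0mem : (0:ℂ) ∈ {s : ℂ | ∀ j, 0 < (line s j).im} := by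
    intro j; simpa [hline] using hz₀ j
  obtain ⟨ρ, hρ, hρsub⟩ := Metric.isOpen_iff.mp hopen 0 h0mem
  -- choose a radius where u is nonvanishing on the sphere
  have hdich := (hudiff.analyticAt (0:ℂ)).eventually_eq_zero_or_eventually_ne_zero
  have hne : ∀ᶠ s in nhdsWithin 0 {(0:ℂ)}ᶜ, u s ≠ 0 := by
    rcases hdich with hev | hne
    · exfalso
      have : Set.EqOn u 0 Set.univ := by
        refine AnalyticOnNhd.eqOn_zero_of_preconnected_of_eventuallyEq_zero
          (fun x _ => hudiff.analyticAt x) isPreconnected_univ (Set.mem_univ (0:ℂ)) hev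
      exact hu1 (this (Set.mem_univ 1))
    · exact hne
  rw [eventually_nhdsWithin_iff, Metric.eventually_nhds_iff] at hne
  obtain ⟨ε, hε, hεne⟩ := hne
  set r : ℝ := min (ε/2) (ρ/2) with hrdef
  have hrpos : 0 < r := lt_min (by linarith) (by linarith)
  have hballsub : Metric.closedBall (0:ℂ) r ⊆ {s : ℂ | ∀ j, 0 < (line s j).im} := by
    intro s hs
    apply hρsub
    rw [Metric.mem_closedBall] at hs
    rw [Metric.mem_ball]
    calc dist s 0 ≤ r := hs
    _ ≤ ρ/2 := min_le_right _ _
    _ < ρ := by linarith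
  have hsph : ∀ s ∈ Metric.sphere (0:ℂ) r, u s ≠ 0 := by
    intro s hs
    rw [Metric.mem_sphere] at hs
    refine hεne ?_ ?_
    · rw [hs]
      calc r ≤ ε/2 := min_le_left _ _
      _ < ε := by linarith
    · simp only [Set.mem_compl_iff, Set.mem_singleton_iff]
      intro h0
      rw [h0, dist_self] at hs
      exact hrpos.ne hs
  -- polynomials along the line for each e i
  have hEi : ∀ i : ℕ, ∃ Q : Polynomial ℂ, ∀ s : ℂ,
      Polynomial.eval s Q = eval (line s) (e i) := fun i => exists_poly_line n (e i) z₀ b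
  choose Q hQ using hEi
  have hBex : ∀ i : ℕ, ∃ B : ℝ, 0 ≤ B ∧
      ∀ s ∈ Metric.closedBall (0:ℂ) r, ‖Polynomial.eval s (Q i)‖ ≤ B := by
    intro i
    obtain ⟨sm, hsm, hmax⟩ := (isCompact_closedBall (0:ℂ) r).exists_isMaxOn
      ⟨0, Metric.mem_closedBall_self hrpos.le⟩
      (continuous_norm.comp (Q i).differentiable.continuous).continuousOn
    exact ⟨‖Polynomial.eval sm (Q i)‖, norm_nonneg _, fun s hs => hmax hs⟩
  choose B hB0 hBle using hBex
  set Cs : ℝ := (∑ i ∈ Finset.range N, B i) + 1 with hCsdef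
  have hsum0 : 0 ≤ ∑ i ∈ Finset.range N, B i := Finset.sum_nonneg fun i _ => hB0 i
  have hCs : 0 < Cs := by rw [hCsdef]; linarith
  have happrox' : ∀ δ > (0:ℝ), ∃ v : ℂ → ℂ, Differentiable ℂ v ∧
      (∀ s ∈ Metric.closedBall (0:ℂ) r, v s ≠ 0) ∧
      ∀ s ∈ Metric.closedBall (0:ℂ) r, ‖v s - u s‖ ≤ δ := by
    intro δ hδ
    obtain ⟨c, hc, hnz⟩ := happrox (δ / Cs) (by positivity)
    refine ⟨fun s => u s + ∑ i ∈ Finset.range N, c i * Polynomial.eval s (Q i), ?_, ?_, ?_⟩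
    · exact hudiff.add (Differentiable.fun_sum fun i _ =>
        (differentiable_const _).mul (Q i).differentiable)
    · intro s hs
      have hls : ∀ j, 0 < (line s j).im := hballsub hs
      have hne0 := hnz (line s) hls
      have heq : u s + ∑ i ∈ Finset.range N, c i * Polynomial.eval s (Q i)
          = eval (line s) h + ∑ i ∈ Finset.range N, c i * eval (line s) (e i) := by
        rw [hu_line]
        congr 1
        exact Finset.sum_congr rfl fun i _ => by rw [hQ i]
      show u s + ∑ i ∈ Finset.range N, c i * Polynomial.eval s (Q i) ≠ 0
      rw [heq]
      exact hne0
    · intro s hs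
      have h1 : (fun s => u s + ∑ i ∈ Finset.range N, c i * Polynomial.eval s (Q i)) s - u s
          = ∑ i ∈ Finset.range N, c i * Polynomial.eval s (Q i) := by ring
      rw [h1]
      calc ‖∑ i ∈ Finset.range N, c i * Polynomial.eval s (Q i)‖
          ≤ ∑ i ∈ Finset.range N, ‖c i * Polynomial.eval s (Q i)‖ := norm_sum_le _ _
        _ ≤ ∑ i ∈ Finset.range N, (δ / Cs) * B i := by
            refine Finset.sum_le_sum fun i hi => ?_
            rw [norm_mul]
            exact mul_le_mul (hc i (Finset.mem_range.mp hi)) (hBle i s hs)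
              (norm_nonneg _) (by positivity)
        _ = (δ / Cs) * ∑ i ∈ Finset.range N, B i := by rw [Finset.mul_sum]
        _ ≤ (δ / Cs) * Cs := by
            refine mul_le_mul_of_nonneg_left ?_ (by positivity)
            rw [hCsdef]; linarith
        _ = δ := div_mul_cancel₀ δ hCs.ne'
  exact hurwitz_contra u hudiff r hrpos hsph happrox' hu0


lemma pow_inv_mul (t : ℂ) (ht : t ≠ 0) (i d : ℕ) (hid : i ≤ d) (a : ℂ) :
    (t⁻¹)^(d-i) * a = (t⁻¹)^d * (a * t^i) := by
  obtain ⟨m, rfl⟩ := Nat.exists_eq_add_of_le hid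
  have h1 : i + m - i = m := by omega
  have h2 : t⁻¹^i * t^i = 1 := by rw [← mul_pow, inv_mul_cancel₀ ht, one_pow]
  calc (t⁻¹)^(i+m-i) * a = t⁻¹^m * a := by rw [h1]
  _ = t⁻¹^m * a * (t⁻¹^i * t^i) := by rw [h2, mul_one]
  _ = (t⁻¹)^(i+m) * (a * t^i) := by rw [pow_add]; ring

/-- If `f(z,t) = Σ_{k=0}^d f_k(z) t^k` is a stable polynomial in the variables
`z_1,…,z_n,t` (the extra variable `t` being indexed by `Option.none`), with
`f_d ≢ 0` (so `d = deg_t f`), then each coefficient `f_k(z)` is stable for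
`0 ≤ k ≤ d`. -/
theorem coeffs_stable (n : ℕ) (f : MvPolynomial (Option (Fin n)) ℂ)
    (hf : IsStable f)
    (d : ℕ) (hd : d = (MvPolynomial.optionEquivLeft ℂ (Fin n) f).natDegree)
    (hfd : (MvPolynomial.optionEquivLeft ℂ (Fin n) f).coeff d ≠ 0) :
    ∀ k ≤ d, IsStable ((MvPolynomial.optionEquivLeft ℂ (Fin n) f).coeff k) := by
  set F := optionEquivLeft ℂ (Fin n) f with hF
  have hf0 : f ≠ 0 := by
    intro h0
    apply hfd
    rw [hF, h0, map_zero, Polynomial.coeff_zero]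
  have hst : ∀ w : Option (Fin n) → ℂ, (∀ j, 0 < (w j).im) → eval w f ≠ 0 :=
    hf.resolve_left hf0
  have hg : ∀ z : Fin n → ℂ, (∀ j, 0 < (z j).im) → ∀ t : ℂ, 0 < t.im →
      Polynomial.eval t (F.map (eval z)) ≠ 0 := by
    intro z hz t ht
    rw [hF, ← eval_option n f z t]
    apply hst
    intro o
    cases o with
    | none => simpa using ht
    | some j => simpa using hz j
  have hdle : ∀ z : Fin n → ℂ, (F.map (eval z)).natDegree ≤ d := fun z =>
    hd ▸ Polynomial.natDegree_map_le
  -- Step A : the leading coefficient does not vanish on the upper half space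
  have hA : ∀ z : Fin n → ℂ, (∀ j, 0 < (z j).im) → eval z (F.coeff d) ≠ 0 := by
    apply main_hurwitz n (F.coeff d) hfd d (fun i => F.coeff i)
    intro δ hδ
    set T : ℝ := max 1 δ⁻¹ with hT
    have hT1 : 1 ≤ T := le_max_left _ _
    have hT0 : 0 < T := lt_of_lt_of_le one_pos hT1
    set t : ℂ := Complex.I * T with ht
    have htim : 0 < t.im := by simpa [ht] using hT0
    have ht0 : t ≠ 0 := fun h => by rw [h] at htim; simp at htim
    have hnt : ‖t‖ = T := by
      rw [ht, norm_mul, Complex.norm_I, one_mul, Complex.norm_real,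
        Real.norm_eq_abs, abs_of_pos hT0]
    refine ⟨fun i => (t⁻¹)^(d - i), ?_, ?_⟩
    · intro i hi
      rw [norm_pow, norm_inv, hnt]
      have h2 : T⁻¹ ≤ δ := by
        rw [inv_le_comm₀ hT0 hδ]
        exact le_max_right _ _
      calc (T⁻¹)^(d-i) ≤ (T⁻¹)^1 :=
            pow_le_pow_of_le_one (inv_nonneg.mpr hT0.le) (inv_le_one_of_one_le₀ hT1) (by omega)
      _ = T⁻¹ := pow_one _
      _ ≤ δ := h2
    · intro z hz
      have hgz := hg z hz t htim
      have hsum : Polynomial.eval t (F.map (eval z))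
          = ∑ i ∈ Finset.range (d+1), eval z (F.coeff i) * t^i := by
        rw [Polynomial.eval_eq_sum_range' (Nat.lt_succ_of_le (hdle z))]
        exact Finset.sum_congr rfl fun i _ => by rw [Polynomial.coeff_map]
      have key : eval z (F.coeff d) + ∑ i ∈ Finset.range d, (t⁻¹)^(d-i) * eval z (F.coeff i)
          = (t⁻¹)^d * Polynomial.eval t (F.map (eval z)) := by
        rw [hsum, Finset.mul_sum, Finset.sum_range_succ, add_comm]
        congr 1
        · exact Finset.sum_congr rfl fun i hi =>
            pow_inv_mul t ht0 i d (Finset.mem_range.mp hi).le _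
        · have := pow_inv_mul t ht0 d d le_rfl (eval z (F.coeff d))
          simpa using this
      rw [key]
      exact mul_ne_zero (pow_ne_zero _ (inv_ne_zero ht0)) hgz
  intro k hk
  rcases eq_or_lt_of_le hk with rfl | hkd
  · exact Or.inr hA
  -- now k < d
  rcases eq_or_ne (F.coeff k) 0 with h0 | hkne
  · exact Or.inl h0
  refine Or.inr ?_
  apply main_hurwitz n (F.coeff k) hkne (d - k) (fun i => F.coeff (i+1+k))
  intro δ hδ
  have hkfac : ((k.factorial : ℝ)) ≠ 0 := by exact_mod_cast k.factorial_ne_zero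
  set Cs : ℝ := (∑ i ∈ Finset.range (d-k),
      ((i+1+k).descFactorial k : ℝ) / (k.factorial : ℝ)) + 1 with hCs
  have hterm0 : ∀ i : ℕ, (0:ℝ) ≤ ((i+1+k).descFactorial k : ℝ) / (k.factorial : ℝ) :=
    fun i => by positivity
  have hsum0 : (0:ℝ) ≤ ∑ i ∈ Finset.range (d-k),
      ((i+1+k).descFactorial k : ℝ) / (k.factorial : ℝ) :=
    Finset.sum_nonneg fun i _ => hterm0 i
  have hCs0 : 0 < Cs := by rw [hCs]; linarith
  set ε : ℝ := min 1 (δ / Cs) with hεdef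
  have hε0 : 0 < ε := lt_min one_pos (by positivity)
  have hε1 : ε ≤ 1 := min_le_left _ _
  set t : ℂ := Complex.I * ε with ht
  have htim : 0 < t.im := by simpa [ht] using hε0
  have hnt : ‖t‖ = ε := by
    rw [ht, norm_mul, Complex.norm_I, one_mul, Complex.norm_real,
      Real.norm_eq_abs, abs_of_pos hε0]
  refine ⟨fun i => ((i+1+k).descFactorial k : ℂ) / (k.factorial : ℂ) * t^(i+1), ?_, ?_⟩
  · intro i hi
    rw [norm_mul, norm_div, norm_pow, hnt]
    have e1 : ‖((i+1+k).descFactorial k : ℂ)‖ = ((i+1+k).descFactorial k : ℝ) := by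
      rw [Complex.norm_natCast]
    have e2 : ‖((k.factorial : ℕ) : ℂ)‖ = ((k.factorial : ℕ) : ℝ) := by
      rw [Complex.norm_natCast]
    rw [e1, e2]
    have hD : ((i+1+k).descFactorial k : ℝ) / (k.factorial : ℝ) ≤ Cs := by
      have := Finset.single_le_sum (f := fun i =>
        ((i+1+k).descFactorial k : ℝ) / (k.factorial : ℝ))
        (fun i _ => hterm0 i) (Finset.mem_range.mpr hi)
      rw [hCs]; linarith
    have hεp : ε^(i+1) ≤ ε := by
      calc ε^(i+1) ≤ ε^1 := pow_le_pow_of_le_one hε0.le hε1 (by omega)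
      _ = ε := pow_one _
    calc ((i+1+k).descFactorial k : ℝ) / (k.factorial : ℝ) * ε^(i+1)
        ≤ Cs * ε := mul_le_mul hD hεp (by positivity) hCs0.le
    _ ≤ Cs * (δ / Cs) := mul_le_mul_of_nonneg_left (min_le_right _ _) hCs0.le
    _ = δ := by rw [mul_comm, div_mul_cancel₀ δ hCs0.ne']
  · intro z hz
    set p := F.map (eval z) with hp
    have hlc : eval z (F.leadingCoeff) ≠ 0 := by
      rw [Polynomial.leadingCoeff, ← hd]
      exact hA z hz
    have hdeg : p.natDegree = d := by
      rw [hp, Polynomial.natDegree_map_of_leadingCoeff_ne_zero _ hlc, ← hd]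
    have hGL := gauss_lucas_iter p (hg z hz) k (by omega)
    have hqnv := hGL.2 t htim
    have hqd : (Polynomial.derivative^[k] p).natDegree ≤ d - k :=
      hdeg ▸ Polynomial.natDegree_iterate_derivative p k
    have hev : Polynomial.eval t (Polynomial.derivative^[k] p)
        = ∑ j ∈ Finset.range (d - k + 1),
            ((j+k).descFactorial k : ℂ) * eval z (F.coeff (j+k)) * t^j := by
      rw [Polynomial.eval_eq_sum_range' (Nat.lt_succ_of_le hqd)]
      refine Finset.sum_congr rfl fun j _ => ?_
      rw [Polynomial.coeff_iterate_derivative, nsmul_eq_mul, hp, Polynomial.coeff_map]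
    have hkfacC : ((k.factorial : ℕ) : ℂ) ≠ 0 := by exact_mod_cast k.factorial_ne_zero
    have key : eval z (F.coeff k) + ∑ i ∈ Finset.range (d-k),
        (((i+1+k).descFactorial k : ℂ) / (k.factorial : ℂ) * t^(i+1)) * eval z (F.coeff (i+1+k))
        = ((k.factorial : ℕ) : ℂ)⁻¹ * Polynomial.eval t (Polynomial.derivative^[k] p) := by
      rw [hev, Finset.sum_range_succ', mul_add, add_comm]
      congr 1
      · rw [Finset.mul_sum]
        refine Finset.sum_congr rfl fun i hi => ?_
        rw [div_eq_mul_inv]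
        ring
      · rw [Nat.zero_add, Nat.descFactorial_self, pow_zero, mul_one, ← mul_assoc,
          inv_mul_cancel₀ hkfacC, one_mul]
    rw [key]
    exact mul_ne_zero (inv_ne_zero hkfacC) hqnv
end

section
/- Let V be a real vector space, φ : V^n → ℝ a multilinear form, and e_1,…,e_n, v_2,…,v_n fixed vectors in V. Suppose the polynomial φ(e_1, v_2 + z_2 e_2, …, v_n + z_n e_n) in ℝ[z_2,…,z_n] is not identically zero. Then the set of all v_1 ∈ V for which the polynomial φ(v_1 + z_1 e_1, v_2 + z_2 e_2, …, v_n + z_n e_n) in ℝ[z_1,…,z_n] is real stable is either empty or a convex cone with apex 0 that contains both e_1 and −e_1. -/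
open MvPolynomial

/-- The polynomial `φ(u_1 + z_1 e_1, …, u_n + z_n e_n)` obtained by multilinear
expansion:  `Σ_{S ⊆ [n]} φ(S.piecewise e u) Π_{j ∈ S} z_j`. -/
noncomputable def affinePoly {n : ℕ} {V : Type*} [AddCommGroup V] [Module ℝ V]
    (φ : MultilinearMap ℝ (fun _ : Fin n => V) ℝ) (e u : Fin n → V) :
    MvPolynomial (Fin n) ℝ :=
  ∑ S : Finset (Fin n),
    MvPolynomial.C (φ (S.piecewise e u)) * ∏ j ∈ S, MvPolynomial.X j

set_option linter.unusedSectionVars false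
namespace StableConeAux
open Complex

variable {n : ℕ} {V : Type*} [AddCommGroup V] [Module ℝ V]

noncomputable def TT (n : ℕ) (B : Finset (Fin (n+1)) → ℝ) : MvPolynomial (Fin (n+1)) ℝ :=
  ∑ S ∈ Finset.univ.filter (fun S : Finset (Fin (n + 1)) => (0 : Fin (n + 1)) ∉ S),
    MvPolynomial.C (B S) * ∏ j ∈ S, MvPolynomial.X j


noncomputable def qq (n : ℕ) (B : Finset (Fin (n+1)) → ℝ) (w : Fin (n+1) → ℂ) : ℂ :=
  ∑ S ∈ Finset.univ.filter (fun S : Finset (Fin (n + 1)) => (0 : Fin (n + 1)) ∉ S),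
    (B S : ℂ) * ∏ j ∈ S, w j

noncomputable def lp (n : ℕ) (B : Finset (Fin (n+1)) → ℝ) (a b : Fin (n+1) → ℂ) : Polynomial ℂ :=
  ∑ S ∈ Finset.univ.filter (fun S : Finset (Fin (n + 1)) => (0 : Fin (n + 1)) ∉ S),
    Polynomial.C ((B S : ℂ)) * ∏ j ∈ S, (Polynomial.C (a j) + Polynomial.C (b j) * Polynomial.X)

lemma eval_map_TT (B : Finset (Fin (n+1)) → ℝ) (w : Fin (n+1) → ℂ) :
    MvPolynomial.eval w (MvPolynomial.map (algebraMap ℝ ℂ) (TT n B)) = qq n B w := by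
  simp [TT, qq, map_sum, MvPolynomial.eval_prod, Complex.coe_algebraMap]

lemma qq_update (B : Finset (Fin (n+1)) → ℝ) (w : Fin (n+1) → ℂ) (z : ℂ) :
    qq n B (Function.update w 0 z) = qq n B w := by
  unfold qq
  refine Finset.sum_congr rfl fun S hS => ?_
  congr 1
  refine Finset.prod_congr rfl fun j hj => ?_
  exact Function.update_of_ne (ne_of_mem_of_not_mem hj (Finset.mem_filter.1 hS).2) _ _

lemma eval_lp (B : Finset (Fin (n+1)) → ℝ) (a b : Fin (n+1) → ℂ) (t : ℂ) :
    (lp n B a b).eval t = qq n B (fun j => a j + b j * t) := by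
  simp [lp, qq, Polynomial.eval_finset_sum, Polynomial.eval_prod]


/-- coefficient family -/
noncomputable def Bx (φ : MultilinearMap ℝ (fun _ : Fin (n + 1) => V) ℝ) (e v : Fin (n + 1) → V)
    (x : V) : Finset (Fin (n+1)) → ℝ :=
  fun S => φ (S.piecewise e (Function.update v 0 x))

lemma piecewise_update {S : Finset (Fin (n+1))} (hS : (0 : Fin (n+1)) ∉ S)
    (e v : Fin (n + 1) → V) (x : V) :
    S.piecewise e (Function.update v 0 x) = Function.update (S.piecewise e v) 0 x := by
  funext j
  by_cases hj : j = 0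
  · subst hj
    simp [Finset.piecewise_eq_of_notMem _ _ _ hS]
  · rw [Function.update_of_ne hj]
    by_cases hjS : j ∈ S
    · simp [Finset.piecewise_eq_of_mem _ _ _ hjS]
    · simp [Finset.piecewise_eq_of_notMem _ _ _ hjS, Function.update_of_ne hj]

lemma insert_piecewise {S : Finset (Fin (n+1))} (hS : (0 : Fin (n+1)) ∉ S)
    (e v : Fin (n + 1) → V) (x : V) :
    (insert (0 : Fin (n+1)) S).piecewise e (Function.update v 0 x)
      = S.piecewise e (Function.update v 0 (e 0)) := by
  funext j
  by_cases hj : j = 0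
  · subst hj
    simp [Finset.piecewise_eq_of_mem _ _ _ (Finset.mem_insert_self _ _),
      Finset.piecewise_eq_of_notMem _ _ _ hS]
  · by_cases hjS : j ∈ S
    · simp [Finset.piecewise_eq_of_mem _ _ _ hjS,
        Finset.piecewise_eq_of_mem _ _ _ (Finset.mem_insert_of_mem hjS)]
    · have : j ∉ insert (0 : Fin (n+1)) S := by
        simp [hj, hjS]
      simp [Finset.piecewise_eq_of_notMem _ _ _ hjS,
        Finset.piecewise_eq_of_notMem _ _ _ this, Function.update_of_ne hj]

lemma piecewise_mem {S : Finset (Fin (n+1))} (hS : (0 : Fin (n+1)) ∈ S)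
    (e v : Fin (n + 1) → V) (x : V) :
    S.piecewise e (Function.update v 0 x)
      = (S.erase 0).piecewise e (Function.update v 0 (e 0)) := by
  funext j
  by_cases hj : j = 0
  · subst hj
    simp [Finset.piecewise_eq_of_mem _ _ _ hS,
      Finset.piecewise_eq_of_notMem _ _ _ (Finset.notMem_erase (0 : Fin (n+1)) S)]
  · by_cases hjS : j ∈ S
    · have : j ∈ S.erase 0 := Finset.mem_erase.2 ⟨hj, hjS⟩
      simp [Finset.piecewise_eq_of_mem _ _ _ hjS, Finset.piecewise_eq_of_mem _ _ _ this]
    · have : j ∉ S.erase 0 := fun h => hjS (Finset.mem_of_mem_erase h)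
      simp [Finset.piecewise_eq_of_notMem _ _ _ hjS,
        Finset.piecewise_eq_of_notMem _ _ _ this, Function.update_of_ne hj]

lemma affine_decomp (φ : MultilinearMap ℝ (fun _ : Fin (n + 1) => V) ℝ)
    (e v : Fin (n + 1) → V) (x : V) :
    affinePoly φ e (Function.update v 0 x)
      = MvPolynomial.X 0 * TT n (Bx φ e v (e 0)) + TT n (Bx φ e v x) := by
  unfold affinePoly TT Bx
  rw [← Finset.sum_filter_add_sum_filter_not Finset.univ
    (fun S : Finset (Fin (n+1)) => (0 : Fin (n+1)) ∈ S)]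
  congr 1
  · rw [Finset.mul_sum]
    refine Finset.sum_bij' (fun S _ => S.erase 0) (fun S _ => insert 0 S) ?_ ?_ ?_ ?_ ?_
    · intro S hS
      simp at hS ⊢
    · intro S hS
      simp at hS ⊢
    · intro S hS
      simp at hS
      exact Finset.insert_erase hS
    · intro S hS
      simp at hS
      exact Finset.erase_insert hS
    · intro S hS
      simp only [Finset.mem_filter, Finset.mem_univ, true_and] at hS
      have h0e : (0 : Fin (n+1)) ∉ S.erase 0 := Finset.notMem_erase _ _
      have hins : insert (0 : Fin (n+1)) (S.erase 0) = S := Finset.insert_erase hS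
      rw [piecewise_mem hS e v x, ← Finset.mul_prod_erase S _ hS]
      ring


variable (φ : MultilinearMap ℝ (fun _ : Fin (n + 1) => V) ℝ) (e v : Fin (n + 1) → V)

lemma Bx_add (x y : V) {S : Finset (Fin (n+1))} (hS : (0 : Fin (n+1)) ∉ S) :
    Bx φ e v (x + y) S = Bx φ e v x S + Bx φ e v y S := by
  unfold Bx
  rw [piecewise_update hS, piecewise_update hS, piecewise_update hS]
  exact φ.map_update_add _ 0 x y

lemma Bx_smul (c : ℝ) (x : V) {S : Finset (Fin (n+1))} (hS : (0 : Fin (n+1)) ∉ S) :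
    Bx φ e v (c • x) S = c * Bx φ e v x S := by
  unfold Bx
  rw [piecewise_update hS, piecewise_update hS]
  rw [φ.map_update_smul _ 0 c x]
  simp

lemma qq_Bx_add (x y : V) (w : Fin (n+1) → ℂ) :
    qq n (Bx φ e v (x + y)) w = qq n (Bx φ e v x) w + qq n (Bx φ e v y) w := by
  unfold qq
  rw [← Finset.sum_add_distrib]
  refine Finset.sum_congr rfl fun S hS => ?_
  rw [Bx_add φ e v x y (Finset.mem_filter.1 hS).2]
  push_cast
  ring

lemma qq_Bx_smul (c : ℝ) (x : V) (w : Fin (n+1) → ℂ) :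
    qq n (Bx φ e v (c • x)) w = (c : ℂ) * qq n (Bx φ e v x) w := by
  unfold qq
  rw [Finset.mul_sum]
  refine Finset.sum_congr rfl fun S hS => ?_
  rw [Bx_smul φ e v c x (Finset.mem_filter.1 hS).2]
  push_cast
  ring

lemma qq_Bx_neg (x : V) (w : Fin (n+1) → ℂ) :
    qq n (Bx φ e v (-x)) w = -qq n (Bx φ e v x) w := by
  have : -x = (-1 : ℝ) • x := by simp
  rw [this, qq_Bx_smul]
  push_cast
  ring

lemma eval_affine (x : V) (w : Fin (n+1) → ℂ) :
    MvPolynomial.eval w (MvPolynomial.map (algebraMap ℝ ℂ) (affinePoly φ e (Function.update v 0 x)))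
      = w 0 * qq n (Bx φ e v (e 0)) w + qq n (Bx φ e v x) w := by
  rw [affine_decomp φ e v x]
  rw [map_add, map_mul, MvPolynomial.map_X, MvPolynomial.eval_add, MvPolynomial.eval_mul,
    MvPolynomial.eval_X, eval_map_TT, eval_map_TT]

lemma affine_ne_zero (hQ : TT n (Bx φ e v (e 0)) ≠ 0) (x : V) :
    affinePoly φ e (Function.update v 0 x) ≠ 0 := by
  intro h
  apply hQ
  have hmap : ∀ w : Fin (n+1) → ℂ, qq n (Bx φ e v (e 0)) w = 0 := by
    intro w
    have h1 := eval_affine φ e v x w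
    have h2 := eval_affine φ e v x (Function.update w 0 (w 0 + 1))
    rw [h] at h1 h2
    simp only [map_zero, MvPolynomial.eval_zero] at h1 h2
    rw [qq_update, qq_update, Function.update_self] at h2
    linear_combination h1 - h2
  have hmap2 : MvPolynomial.map (algebraMap ℝ ℂ) (TT n (Bx φ e v (e 0))) = 0 := by
    apply MvPolynomial.funext
    intro w
    rw [eval_map_TT, hmap]
    simp
  have := MvPolynomial.map_injective (σ := Fin (n+1)) (algebraMap ℝ ℂ) (algebraMap ℝ ℂ).injective
  apply this
  simpa using hmap2

lemma exists_root_z {q l : ℂ} (h : (l * (starRingEnd ℂ) q).im < 0) :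
    ∃ z : ℂ, 0 < z.im ∧ z * q + l = 0 := by
  have hq : q ≠ 0 := by
    rintro rfl
    simp at h
  refine ⟨-l / q, ?_, by field_simp; ring⟩
  have h1 : (-l / q) * ((Complex.normSq q : ℝ) : ℂ) = -(l * (starRingEnd ℂ) q) := by
    rw [← Complex.mul_conj]
    field_simp
  have h2 : ((-l / q) * ((Complex.normSq q : ℝ) : ℂ)).im = (-l / q).im * Complex.normSq q := by
    simp [Complex.mul_im]
  have h3 : 0 < Complex.normSq q := Complex.normSq_pos.2 hq
  have h4 : (-l / q).im * Complex.normSq q = -(l * (starRingEnd ℂ) q).im := by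
    rw [← h2, h1]
    simp
  nlinarith

lemma nonvanish {q l w0 : ℂ} (hq : q ≠ 0) (hw : 0 < w0.im)
    (hl : 0 ≤ (l * (starRingEnd ℂ) q).im) : w0 * q + l ≠ 0 := by
  intro h
  have h1 : w0 * (q * (starRingEnd ℂ) q) + l * (starRingEnd ℂ) q = 0 := by
    linear_combination ((starRingEnd ℂ) q) * h
  rw [Complex.mul_conj] at h1
  have h2 : (w0 * ((Complex.normSq q : ℝ) : ℂ)).im = w0.im * Complex.normSq q := by
    simp [Complex.mul_im]
  have h4 := congrArg Complex.im h1
  rw [Complex.add_im, h2, Complex.zero_im] at h4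
  have h3 : 0 < Complex.normSq q := Complex.normSq_pos.2 hq
  nlinarith

lemma im_nonneg (BQ BL : Finset (Fin (n+1)) → ℝ)
    (hu : ∀ w : Fin (n+1) → ℂ, (∀ j, 0 < (w j).im) →
      w 0 * qq n BQ w + qq n BL w ≠ 0)
    {w : Fin (n+1) → ℂ} (hw : ∀ j, 0 < (w j).im) :
    0 ≤ (qq n BL w * (starRingEnd ℂ) (qq n BQ w)).im := by
  by_contra hlt
  push_neg at hlt
  obtain ⟨z, hz, hzq⟩ := exists_root_z hlt
  refine hu (Function.update w 0 z) ?_ ?_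
  · intro j
    by_cases hj : j = 0
    · subst hj; simpa using hz
    · rw [Function.update_of_ne hj]; exact hw j
  · rw [Function.update_self, qq_update, qq_update]
    exact hzq

set_option maxHeartbeats 2000000 in
lemma q_stable (BQ BL : Finset (Fin (n+1)) → ℝ)
    (hQ : MvPolynomial.map (algebraMap ℝ ℂ) (TT n BQ) ≠ 0)
    (hu : ∀ w : Fin (n+1) → ℂ, (∀ j, 0 < (w j).im) →
      w 0 * qq n BQ w + qq n BL w ≠ 0)
    {w₀ : Fin (n+1) → ℂ} (hw₀ : ∀ j, 0 < (w₀ j).im) : qq n BQ w₀ ≠ 0 := by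
  intro hq0
  have hex : ∃ x : Fin (n+1) → ℂ, qq n BQ x ≠ 0 := by
    by_contra hc
    push_neg at hc
    apply hQ
    apply MvPolynomial.funext
    intro w
    rw [eval_map_TT, hc w]
    simp
  have hρ0 : qq n BL w₀ ≠ 0 := by
    intro h
    exact hu w₀ hw₀ (by rw [hq0, h]; ring)
  obtain ⟨xh, hxh⟩ := hex
  set b : Fin (n+1) → ℂ := fun j => xh j - w₀ j with hb
  set ψ : Polynomial ℂ := lp n BQ w₀ b with hψ
  set ρ : Polynomial ℂ := lp n BL w₀ b with hρ
  have hline0 : (fun j => w₀ j + b j * 0) = w₀ := by funext j; simp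
  have hline1 : (fun j => w₀ j + b j * 1) = xh := by funext j; simp [hb]
  have hψ0 : ψ.eval 0 = 0 := by rw [hψ, eval_lp, hline0]; exact hq0
  have hψ1 : ψ.eval 1 ≠ 0 := by rw [hψ, eval_lp, hline1]; exact hxh
  have hψne : ψ ≠ 0 := fun h => hψ1 (by rw [h]; simp)
  set m := ψ.rootMultiplicity 0 with hm
  have hmpos : 0 < m := (Polynomial.rootMultiplicity_pos hψne).2 hψ0
  set ψ₁ := ψ /ₘ (Polynomial.X - Polynomial.C 0) ^ m with hψ₁
  have hfact : (Polynomial.X - Polynomial.C 0) ^ m * ψ₁ = ψ :=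
    Polynomial.pow_mul_divByMonic_rootMultiplicity_eq ψ 0
  have hψ₁0 : ψ₁.eval 0 ≠ 0 :=
    Polynomial.eval_divByMonic_pow_rootMultiplicity_ne_zero 0 hψne
  set c0 := ρ.eval 0 * (starRingEnd ℂ) (ψ₁.eval 0) with hc0def
  have hρev : ρ.eval 0 = qq n BL w₀ := by rw [hρ, eval_lp, hline0]
  have hc0 : c0 ≠ 0 := mul_ne_zero (hρev ▸ hρ0) (by simpa using hψ₁0)
  set ζ := -Complex.I * (starRingEnd ℂ) c0 with hζdef
  have hζ : ζ ≠ 0 := by simp [hζdef, hc0, Complex.I_ne_zero]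
  obtain ⟨α, hα⟩ := IsAlgClosed.exists_pow_nat_eq ζ hmpos
  set g : ℂ → ℝ := fun t => (ρ.eval t * (starRingEnd ℂ) (ψ₁.eval t) * ζ).im with hg
  have hgc : Continuous g :=
    Complex.continuous_im.comp ((ρ.continuous.mul ψ₁.continuous.star).mul continuous_const)
  have hg0 : g 0 < 0 := by
    have h1 : ρ.eval 0 * (starRingEnd ℂ) (ψ₁.eval 0) * ζ
        = -(Complex.I * ((Complex.normSq c0 : ℝ) : ℂ)) := by
      rw [← hc0def, hζdef, ← Complex.mul_conj]
      ring
    have h2 : g 0 = -Complex.normSq c0 := by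
      rw [hg]
      simp only [h1]
      simp [Complex.mul_im]
    rw [h2]
    simp [Complex.normSq_pos.2 hc0]
  have hev : ∀ᶠ t in nhds (0:ℂ), g t < 0 ∧ ∀ j, 0 < (w₀ j + b j * t).im := by
    refine Filter.Eventually.and ((hgc.tendsto 0).eventually_lt_const hg0) ?_
    rw [Filter.eventually_all]
    intro j
    have hc : Continuous fun t : ℂ => (w₀ j + b j * t).im :=
      Complex.continuous_im.comp (continuous_const.add (continuous_const.mul continuous_id))
    have h5 : (fun t : ℂ => (w₀ j + b j * t).im) 0 = (w₀ j).im := by simp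
    exact (Filter.Tendsto.eventually_const_lt (hw₀ j) (h5 ▸ hc.tendsto 0))
  obtain ⟨δ, hδpos, hδ⟩ := Metric.eventually_nhds_iff.1 hev
  set ε := δ / (2 * (‖α‖ + 1)) with hε
  have hεpos : 0 < ε := by positivity
  set t := (ε : ℂ) * (starRingEnd ℂ) α with ht
  have hdist : dist t 0 < δ := by
    rw [dist_zero_right]
    have habs : ‖t‖ = ε * ‖α‖ := by
      rw [ht]
      simp only [norm_mul, Complex.norm_conj, Complex.norm_real, Real.norm_eq_abs]
      rw [abs_of_pos hεpos]
    rw [habs, hε]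
    rw [div_mul_eq_mul_div, div_lt_iff₀ (by positivity)]
    nlinarith [norm_nonneg α, hδpos]
  obtain ⟨hgt, hupper⟩ := hδ hdist
  have hconj : (starRingEnd ℂ) t = (ε : ℂ) * α := by
    rw [ht, map_mul, Complex.conj_conj, Complex.conj_ofReal]
  have him : (ρ.eval t * (starRingEnd ℂ) (ψ.eval t)).im < 0 := by
    have h1 : ψ.eval t = t ^ m * ψ₁.eval t := by
      conv_lhs => rw [← hfact]
      simp [Polynomial.eval_mul, Polynomial.eval_pow]
    have h2 : ρ.eval t * (starRingEnd ℂ) (ψ.eval t)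
        = ((ε ^ m : ℝ) : ℂ) * (ρ.eval t * (starRingEnd ℂ) (ψ₁.eval t) * ζ) := by
      rw [h1, map_mul, map_pow, hconj, ← hα]
      push_cast
      ring
    have h3 : ∀ (r : ℝ) (zc : ℂ), ((r : ℂ) * zc).im = r * zc.im := fun r zc => by
      simp [Complex.mul_im]
    rw [h2, h3]
    exact mul_neg_of_pos_of_neg (pow_pos hεpos m) hgt
  obtain ⟨z, hz, hzq⟩ := exists_root_z him
  refine hu (Function.update (fun j => w₀ j + b j * t) 0 z) ?_ ?_
  · intro j
    by_cases hj : j = 0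
    · subst hj; simpa using hz
    · rw [Function.update_of_ne hj]; exact hupper j
  · rw [Function.update_self, qq_update, qq_update, ← eval_lp, ← eval_lp, ← hψ, ← hρ]
    exact hzq

end StableConeAux

open StableConeAux in
/-- Let `φ : V^n → ℝ` be a multilinear form and `e_1,…,e_n, v_2,…,v_n` fixed
vectors.  If `φ(e_1, v_2 + z_2 e_2, …, v_n + z_n e_n)` is not identically zero,
then the set of `v_1 ∈ V` for which `φ(v_1 + z_1 e_1, …, v_n + z_n e_n)` is
real stable is empty or a convex cone (with apex `0`) containing `e_1` and
`-e_1`.  (Here the first coordinate is indexed by `0 : Fin (n+1)`.) -/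
theorem stable_cone (n : ℕ) (V : Type*) [AddCommGroup V] [Module ℝ V]
    (φ : MultilinearMap ℝ (fun _ : Fin (n + 1) => V) ℝ) (e v : Fin (n + 1) → V)
    (h0 : (∑ S ∈ Finset.univ.filter (fun S : Finset (Fin (n + 1)) => (0 : Fin (n + 1)) ∉ S),
        MvPolynomial.C (φ (S.piecewise e (Function.update v 0 (e 0)))) *
          ∏ j ∈ S, MvPolynomial.X j) ≠ (0 : MvPolynomial (Fin (n + 1)) ℝ)) :
    letI Cs : Set V :=
      {v₁ | RealStable (affinePoly φ e (Function.update v 0 v₁))}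
    Cs = ∅ ∨
      (e 0 ∈ Cs ∧ -e 0 ∈ Cs ∧
        (∀ u ∈ Cs, ∀ w ∈ Cs, u + w ∈ Cs) ∧
        (∀ c : ℝ, 0 < c → ∀ u ∈ Cs, c • u ∈ Cs)) := by
  classical
  have hTT : TT n (Bx φ e v (e 0)) ≠ 0 := h0
  have hinj := MvPolynomial.map_injective (σ := Fin (n + 1)) (algebraMap ℝ ℂ)
    (algebraMap ℝ ℂ).injective
  have hmapTT : MvPolynomial.map (algebraMap ℝ ℂ) (TT n (Bx φ e v (e 0))) ≠ 0 := by
    intro h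
    exact hTT (hinj (by simpa using h))
  by_cases hCs : {v₁ | RealStable (affinePoly φ e (Function.update v 0 v₁))} = (∅ : Set V)
  · left; exact hCs
  right
  obtain ⟨u₀, hu₀⟩ := Set.nonempty_iff_ne_empty.2 hCs
  have point : ∀ x : V, x ∈ {v₁ | RealStable (affinePoly φ e (Function.update v 0 v₁))} →
      ∀ w : Fin (n+1) → ℂ, (∀ j, 0 < (w j).im) →
        w 0 * qq n (Bx φ e v (e 0)) w + qq n (Bx φ e v x) w ≠ 0 := by
    intro x hx w hw
    rcases hx with h | h
    · exact absurd (hinj (by simpa using h)) (affine_ne_zero φ e v hTT x)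
    · have hne := h w hw
      rwa [eval_affine φ e v x w] at hne
  have hmem : ∀ x : V, (∀ w : Fin (n+1) → ℂ, (∀ j, 0 < (w j).im) →
      w 0 * qq n (Bx φ e v (e 0)) w + qq n (Bx φ e v x) w ≠ 0) →
      x ∈ {v₁ | RealStable (affinePoly φ e (Function.update v 0 v₁))} := by
    intro x hx
    exact Or.inr fun w hw => by rw [eval_affine φ e v x w]; exact hx w hw
  have hq : ∀ w : Fin (n+1) → ℂ, (∀ j, 0 < (w j).im) → qq n (Bx φ e v (e 0)) w ≠ 0 :=
    fun w hw => q_stable (Bx φ e v (e 0)) (Bx φ e v u₀) hmapTT (point u₀ hu₀) hw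
  have hIm : ∀ x ∈ {v₁ | RealStable (affinePoly φ e (Function.update v 0 v₁))},
      ∀ w : Fin (n+1) → ℂ, (∀ j, 0 < (w j).im) →
      0 ≤ (qq n (Bx φ e v x) w * (starRingEnd ℂ) (qq n (Bx φ e v (e 0)) w)).im :=
    fun x hx w hw => im_nonneg _ _ (point x hx) hw
  have him_real : ∀ (r : ℝ) (zc : ℂ), ((r : ℂ) * zc).im = r * zc.im := fun r zc => by
    simp [Complex.mul_im]
  refine ⟨?_, ?_, ?_, ?_⟩
  · apply hmem
    intro w hw
    apply nonvanish (hq w hw) (hw 0)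
    rw [Complex.mul_conj]
    simp
  · apply hmem
    intro w hw
    rw [qq_Bx_neg]
    apply nonvanish (hq w hw) (hw 0)
    rw [neg_mul, Complex.mul_conj]
    simp
  · intro u hu u' hu'
    apply hmem
    intro w hw
    rw [qq_Bx_add]
    apply nonvanish (hq w hw) (hw 0)
    rw [add_mul, Complex.add_im]
    exact add_nonneg (hIm u hu w hw) (hIm u' hu' w hw)
  · intro c hc u hu
    apply hmem
    intro w hw
    rw [qq_Bx_smul]
    apply nonvanish (hq w hw) (hw 0)
    rw [mul_assoc, him_real]
    exact mul_nonneg hc.le (hIm u hu w hw)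
end

section
/- Let T : ℝ[z_1,…,z_n] → ℝ[z_1,…,z_n] be a linear transformation that preserves real stability (i.e., T(f) is real stable whenever f is real stable). For f ∈ ℂ[z_1,…,z_n] written uniquely as f = g + i·h with g, h ∈ ℝ[z_1,…,z_n], define T_ℂ(f) = T(g) + i·T(h) and T̂_ℂ(f) = T(g) − i·T(h). Then for every stable f ∈ ℂ[z_1,…,z_n], either T_ℂ(f) is stable or T̂_ℂ(f) is stable. -/
open MvPolynomial

namespace BBhelper


noncomputable abbrev mc {n : ℕ} (p : MvPolynomial (Fin n) ℝ) : MvPolynomial (Fin n) ℂ :=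
  MvPolynomial.map (algebraMap ℝ ℂ) p

/-! ### elementary helpers -/

lemma multiset_prod_le (s : Multiset ℂ) (f g : ℂ → ℝ) (h0 : ∀ i, 0 ≤ f i)
    (h1 : ∀ i ∈ s, f i ≤ g i) :
    (Multiset.map f s).prod ≤ (Multiset.map g s).prod := by
  induction s using Multiset.induction_on with
  | empty => simp
  | cons a t ih =>
    simp only [Multiset.map_cons, Multiset.prod_cons]
    have hfa := h0 a
    have hga := h1 a (Multiset.mem_cons_self a t)
    have ht : (Multiset.map f t).prod ≤ (Multiset.map g t).prod :=
      ih (fun i hi => h1 i (Multiset.mem_cons_of_mem hi))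
    have hft : 0 ≤ (Multiset.map f t).prod :=
      Multiset.prod_nonneg (by
        intro x hx
        obtain ⟨i, hi, rfl⟩ := Multiset.mem_map.mp hx
        exact h0 i)
    nlinarith

lemma abs_eval_prod (P : Polynomial ℂ) (z : ℂ)
    (hfac : P = Polynomial.C P.leadingCoeff *
      (Multiset.map (fun a => Polynomial.X - Polynomial.C a) P.roots).prod) :
    ‖P.eval z‖
      = ‖P.leadingCoeff‖
        * (Multiset.map (fun a => ‖z - a‖) P.roots).prod := by
  conv_lhs => rw [hfac]
  rw [Polynomial.eval_mul, norm_mul, Polynomial.eval_multiset_prod, Multiset.map_map,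
    show ∀ m : Multiset ℂ, ‖m.prod‖ = (m.map (‖·‖)).prod from
      fun m => map_multiset_prod (normHom (α := ℂ)) m, Multiset.map_map]
  simp [Function.comp]

lemma uni_bound (P : Polynomial ℂ) (hP : P ≠ 0)
    (hst : ∀ z : ℂ, 0 < z.im → P.eval z ≠ 0) :
    ‖P.eval (-Complex.I)‖ ≤ ‖P.eval Complex.I‖ := by
  clear hP
  have hsplit : P.Splits := IsAlgClosed.splits P
  have hfac := hsplit.eq_prod_roots
  have hroot : ∀ a ∈ P.roots, a.im ≤ 0 := by
    intro a ha
    by_contra hc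
    push_neg at hc
    exact hst a hc ((Polynomial.isRoot_of_mem_roots ha))
  rw [abs_eval_prod P _ hfac, abs_eval_prod P _ hfac]
  apply mul_le_mul_of_nonneg_left _ (norm_nonneg _)
  apply multiset_prod_le _ _ _ (fun i => norm_nonneg _)
  intro a ha
  have him : a.im ≤ 0 := hroot a ha
  have h1 : ‖-Complex.I - a‖ ^ 2 ≤ ‖Complex.I - a‖ ^ 2 := by
    rw [Complex.sq_norm, Complex.sq_norm, Complex.normSq_apply, Complex.normSq_apply]
    simp only [Complex.sub_re, Complex.sub_im, Complex.neg_re, Complex.neg_im,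
      Complex.I_re, Complex.I_im]
    nlinarith
  nlinarith [norm_nonneg (-Complex.I - a), norm_nonneg (Complex.I - a)]

lemma line_eval (n : ℕ) (f : MvPolynomial (Fin n) ℂ) (a b : Fin n → ℂ) (s : ℂ) :
    Polynomial.eval s (MvPolynomial.aeval
      (fun j => Polynomial.C (a j) + Polynomial.C (b j) * Polynomial.X) f)
      = MvPolynomial.eval (fun j => a j + b j * s) f := by
  have := congrFun (congrArg (fun (φ : MvPolynomial (Fin n) ℂ →ₐ[ℂ] ℂ) => ⇑φ)
    (MvPolynomial.comp_aeval
      (fun j => Polynomial.C (a j) + Polynomial.C (b j) * Polynomial.X)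
      (Polynomial.aeval s))) f
  simp only [AlgHom.coe_comp, Function.comp_apply] at this
  simpa using this

lemma abs_conj_le (n : ℕ) (f : MvPolynomial (Fin n) ℂ)
    (hf : ∀ w : Fin n → ℂ, (∀ j, 0 < (w j).im) → MvPolynomial.eval w f ≠ 0)
    (w : Fin n → ℂ) (hw : ∀ j, 0 < (w j).im) :
    ‖MvPolynomial.eval (fun j => (starRingEnd ℂ) (w j)) f‖
      ≤ ‖MvPolynomial.eval w f‖ := by
  set a : Fin n → ℂ := fun j => ((w j).re : ℂ) with ha
  set b : Fin n → ℂ := fun j => ((w j).im : ℂ) with hb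
  set P : Polynomial ℂ := MvPolynomial.aeval
      (fun j => Polynomial.C (a j) + Polynomial.C (b j) * Polynomial.X) f with hP
  have hline : ∀ s : ℂ, Polynomial.eval s P = MvPolynomial.eval (fun j => a j + b j * s) f :=
    fun s => line_eval n f a b s
  have hupper : ∀ s : ℂ, 0 < s.im → ∀ j, 0 < ((a j + b j * s)).im := by
    intro s hs j
    simp only [ha, hb, Complex.add_im, Complex.ofReal_im, Complex.mul_im, Complex.ofReal_re,
      Complex.ofReal_im, zero_add, zero_mul, sub_zero]
    have := hw j
    nlinarith
  have hwi : (fun j => a j + b j * Complex.I) = w := by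
    funext j
    apply Complex.ext <;> simp [ha, hb]
  have hwc : (fun j => a j + b j * (-Complex.I)) = fun j => (starRingEnd ℂ) (w j) := by
    funext j
    apply Complex.ext <;> simp [ha, hb]
  have hst : ∀ z : ℂ, 0 < z.im → P.eval z ≠ 0 := by
    intro z hz
    rw [hline]
    exact hf _ (hupper z hz)
  have hP0 : P ≠ 0 := by
    intro h0
    apply hf w hw
    rw [← hwi, ← hline, h0, Polynomial.eval_zero]
  have := uni_bound P hP0 hst
  rwa [hline, hline, hwi, hwc] at this

lemma eq_zero_of_vanish (n : ℕ) (p : MvPolynomial (Fin n) ℂ)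
    (hp : ∀ w : Fin n → ℂ, (∀ j, 0 < (w j).im) → MvPolynomial.eval w p = 0) :
    p = 0 := by
  apply MvPolynomial.funext
  intro u
  set a : Fin n → ℂ := fun _ => Complex.I with ha
  set b : Fin n → ℂ := fun j => u j - Complex.I with hb
  set q : Polynomial ℂ := MvPolynomial.aeval
      (fun j => Polynomial.C (a j) + Polynomial.C (b j) * Polynomial.X) p with hq
  set ε : ℝ := 1 / (1 + ∑ j, |(u j).im - 1|) with hε
  have hsum : ∀ j, |(u j).im - 1| ≤ ∑ j, |(u j).im - 1| :=
    fun j => Finset.single_le_sum (f := fun j => |(u j).im - 1|)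
      (fun i _ => abs_nonneg _) (Finset.mem_univ j)
  have hsumnn : 0 ≤ ∑ j, |(u j).im - 1| :=
    Finset.sum_nonneg fun i _ => abs_nonneg _
  have hεpos : 0 < ε := by positivity
  have hroots : ∀ s : ℝ, |s| < ε → Polynomial.eval (s : ℂ) q = 0 := by
    intro s hs
    rw [hq, line_eval]
    apply hp
    intro j
    have him : (a j + b j * (s : ℂ)).im = 1 + s * ((u j).im - 1) := by
      simp [ha, hb, Complex.add_im, Complex.mul_im]
      ring
    rw [him]
    have h1 : |s * ((u j).im - 1)| < 1 := by
      rw [abs_mul]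
      calc |s| * |(u j).im - 1| ≤ ε * (∑ j, |(u j).im - 1|) := by
            apply mul_le_mul (le_of_lt hs) (hsum j) (abs_nonneg _) (le_of_lt hεpos)
        _ < 1 := by
            rw [hε]
            rw [div_mul_eq_mul_div, one_mul, div_lt_one (by positivity)]
            linarith
    have := neg_abs_le (s * ((u j).im - 1))
    linarith [abs_lt.mp h1]
  have hq0 : q = 0 := by
    apply Polynomial.eq_zero_of_infinite_isRoot
    apply Set.Infinite.mono (s := (fun (t : ℝ) => (t:ℂ)) '' (Set.Ioo 0 ε))
    · rintro z ⟨t, ht, rfl⟩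
      exact hroots t (by rw [abs_of_pos ht.1]; exact ht.2)
    · apply Set.Infinite.image
      · intro x _ y _ hxy
        simpa using hxy
      · exact Set.Ioo_infinite hεpos
  have h1 := line_eval n p a b 1
  rw [← hq, hq0, Polynomial.eval_zero] at h1
  have : (fun j => a j + b j * 1) = u := by
    funext j
    simp [ha, hb]
  rw [this] at h1
  simp [← h1]

lemma diff_eval (n : ℕ) (p : MvPolynomial (Fin n) ℂ) :
    Differentiable ℂ (fun w : Fin n → ℂ => MvPolynomial.eval w p) := by
  induction p using MvPolynomial.induction_on with
  | C a => simp only [MvPolynomial.eval_C]; exact differentiable_const a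
  | add p q hp hq => simp only [map_add]; exact hp.add hq
  | mul_X p j hp =>
    simp only [map_mul, MvPolynomial.eval_X]
    exact hp.mul ((ContinuousLinearMap.proj j : (Fin n → ℂ) →L[ℂ] ℂ).differentiable)

lemma cont_eval (n : ℕ) (p : MvPolynomial (Fin n) ℂ) :
    Continuous (fun w : Fin n → ℂ => MvPolynomial.eval w p) :=
  (diff_eval n p).continuous

lemma upper_open (n : ℕ) : IsOpen {w : Fin n → ℂ | ∀ j, 0 < (w j).im} := by
  have : {w : Fin n → ℂ | ∀ j, 0 < (w j).im} = ⋂ j, {w | 0 < (w j).im} := by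
    ext w; simp
  rw [this]
  apply isOpen_iInter_of_finite
  intro j
  exact isOpen_lt continuous_const (Complex.continuous_im.comp (continuous_apply j))

lemma upper_convex (n : ℕ) : Convex ℝ {w : Fin n → ℂ | ∀ j, 0 < (w j).im} := by
  intro x hx y hy s t hs ht hst
  intro j
  have : ((s • x + t • y) j).im = s * (x j).im + t * (y j).im := by
    simp [Complex.add_im, Complex.smul_im]
  rw [this]
  rcases eq_or_lt_of_le hs with rfl | hs'
  · simp at hst; simp [hst]; nlinarith [hy j]
  rcases eq_or_lt_of_le ht with rfl | ht'
  · simp at hst; simp [hst]; nlinarith [hx j]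
  nlinarith [hx j, hy j]

lemma eval_conj_bar (n : ℕ) (f : MvPolynomial (Fin n) ℂ) (w : Fin n → ℂ) :
    MvPolynomial.eval w (MvPolynomial.map (starRingEnd ℂ) f)
      = (starRingEnd ℂ) (MvPolynomial.eval (fun j => (starRingEnd ℂ) (w j)) f) := by
  rw [MvPolynomial.eval_map]
  have : MvPolynomial.eval (fun j => (starRingEnd ℂ) (w j)) f
      = MvPolynomial.eval₂ (RingHom.id ℂ) (fun j => (starRingEnd ℂ) (w j)) f := by
    rw [← MvPolynomial.eval_map]; simp
  rw [this, MvPolynomial.eval₂_comp_left (starRingEnd ℂ)]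
  congr 1
  ext x; simp

lemma rigidity (n : ℕ) (f : MvPolynomial (Fin n) ℂ)
    (hf : ∀ w : Fin n → ℂ, (∀ j, 0 < (w j).im) → MvPolynomial.eval w f ≠ 0)
    (w₀ : Fin n → ℂ) (hw₀ : ∀ j, 0 < (w₀ j).im)
    (heq : ‖MvPolynomial.eval w₀ (MvPolynomial.map (starRingEnd ℂ) f)‖
      = ‖MvPolynomial.eval w₀ f‖) :
    ∃ c : ℂ, ‖c‖ = 1 ∧
      MvPolynomial.map (starRingEnd ℂ) f = MvPolynomial.C c * f := by
  set U := {w : Fin n → ℂ | ∀ j, 0 < (w j).im} with hU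
  set fb := MvPolynomial.map (starRingEnd ℂ) f with hfb
  set Φ : (Fin n → ℂ) → ℂ := fun w => MvPolynomial.eval w fb / MvPolynomial.eval w f with hΦ
  have hbound : ∀ w ∈ U, ‖MvPolynomial.eval w fb‖
      ≤ ‖MvPolynomial.eval w f‖ := by
    intro w hw
    rw [hfb, eval_conj_bar, Complex.norm_conj]
    exact abs_conj_le n f hf w hw
  have hdiff : DifferentiableOn ℂ Φ U := by
    rw [hΦ]
    have : (fun w => MvPolynomial.eval w fb / MvPolynomial.eval w f)
        = fun w => MvPolynomial.eval w fb * (MvPolynomial.eval w f)⁻¹ := by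
      funext w; rw [div_eq_mul_inv]
    rw [this]
    exact DifferentiableOn.mul (diff_eval n fb).differentiableOn
      ((diff_eval n f).differentiableOn.inv (fun w hw => hf w hw))
  have hmax : IsMaxOn (norm ∘ Φ) U w₀ := by
    intro w hw
    simp only [Function.comp_apply, Set.mem_setOf_eq]
    have h1 : ‖Φ w‖ ≤ 1 := by
      rw [hΦ]
      simp only [norm_div]
      rw [div_le_one_iff]
      left
      constructor
      · exact (norm_pos_iff.mpr (hf w hw))
      · exact hbound w hw
    have h2 : ‖Φ w₀‖ = 1 := by
      rw [hΦ]
      simp only [norm_div]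
      rw [heq, div_self (ne_of_gt (norm_pos_iff.mpr (hf w₀ hw₀)))]
    rw [h2]; exact h1
  have heqon := Complex.eqOn_of_isPreconnected_of_isMaxOn_norm
    ((upper_convex n).isPreconnected) (upper_open n) hdiff hw₀ hmax
  set c := Φ w₀ with hc
  refine ⟨c, ?_, ?_⟩
  · have h2 : ‖Φ w₀‖ = 1 := by
      rw [hΦ]
      simp only [norm_div]
      rw [heq, div_self (ne_of_gt (norm_pos_iff.mpr (hf w₀ hw₀)))]
    simpa using h2
  · have heval : ∀ w ∈ U, MvPolynomial.eval w fb = c * MvPolynomial.eval w f := by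
      intro w hw
      have h3 : Φ w = c := heqon hw
      rw [hΦ] at h3
      simp only at h3
      rw [div_eq_iff (hf w hw)] at h3
      exact h3
    have hzero : MvPolynomial.map (starRingEnd ℂ) f - MvPolynomial.C c * f = 0 := by
      apply eq_zero_of_vanish
      intro w hw
      simp only [map_sub, map_mul, MvPolynomial.eval_C]
      rw [← hfb, heval w hw]
      ring
    exact sub_eq_zero.mp hzero

lemma mc_inj {n : ℕ} : Function.Injective (mc (n := n)) :=
  MvPolynomial.map_injective _ (algebraMap ℝ ℂ).injective

lemma mc_smul {n : ℕ} (α : ℝ) (p : MvPolynomial (Fin n) ℝ) :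
    mc (α • p) = MvPolynomial.C (α : ℂ) * mc p := by
  simp only [mc, MvPolynomial.smul_eq_C_mul, map_mul, MvPolynomial.map_C,
    Complex.coe_algebraMap]

lemma eval_mc_combo {n : ℕ} (α β : ℝ) (g h : MvPolynomial (Fin n) ℝ) (w : Fin n → ℂ) :
    MvPolynomial.eval w (mc (α • g + β • h))
      = (α : ℂ) * MvPolynomial.eval w (mc g) + (β : ℂ) * MvPolynomial.eval w (mc h) := by
  have : mc (α • g + β • h) = mc (α • g) + mc (β • h) := by
    simp [mc, map_add]
  rw [this, mc_smul, mc_smul]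
  simp

lemma decomp_zero {n : ℕ} (g h : MvPolynomial (Fin n) ℝ)
    (H : mc g + MvPolynomial.C Complex.I * mc h = 0) : g = 0 ∧ h = 0 := by
  have key : ∀ m : Fin n →₀ ℕ, g.coeff m = 0 ∧ h.coeff m = 0 := by
    intro m
    have h0 := congrArg (MvPolynomial.coeff m) H
    simp only [MvPolynomial.coeff_add, MvPolynomial.coeff_C_mul, MvPolynomial.coeff_map,
      MvPolynomial.coeff_zero, Complex.coe_algebraMap] at h0
    have h1 : ((MvPolynomial.coeff m g : ℝ) : ℂ) + Complex.I * ((MvPolynomial.coeff m h : ℝ) : ℂ) = 0 := h0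
    rw [Complex.ext_iff] at h1
    simp at h1
    exact h1
  constructor <;> [skip; skip] <;>
  · apply MvPolynomial.ext
    intro m
    simp [(key m).1, (key m).2]

lemma stable_C_mul {n : ℕ} (c : ℂ) (hc : c ≠ 0) (p : MvPolynomial (Fin n) ℂ)
    (hp : IsStable p) : IsStable (MvPolynomial.C c * p) := by
  rcases hp with h0 | hnv
  · left; rw [h0, mul_zero]
  · right
    intro w hw
    rw [map_mul, MvPolynomial.eval_C]
    exact mul_ne_zero hc (hnv w hw)

lemma abs_sub_eq_abs_add {x y : ℂ} (h : (x * (starRingEnd ℂ) y).im = 0) :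
    ‖x - Complex.I * y‖ = ‖x + Complex.I * y‖ := by
  rw [Complex.norm_def, Complex.norm_def]
  congr 1
  simp only [Complex.normSq_apply, Complex.sub_re, Complex.sub_im, Complex.add_re,
    Complex.add_im, Complex.mul_re, Complex.mul_im, Complex.I_re, Complex.I_im,
    Complex.conj_re, Complex.conj_im] at h ⊢
  nlinarith [h]

lemma combo_eq_smul {n : ℕ} (r α β : ℝ) (g h : MvPolynomial (Fin n) ℝ) (hg : g = r • h) :
    α • g + β • h = (α * r + β) • h := by
  rw [hg, smul_smul, ← add_smul]

lemma im_conj_zero {x y : ℂ} {α β : ℝ} (hne : ¬(α = 0 ∧ β = 0))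
    (hxy : (α : ℂ) * x + (β : ℂ) * y = 0) : (x * (starRingEnd ℂ) y).im = 0 := by
  have hre : α * x.re + β * y.re = 0 := by
    have := congrArg Complex.re hxy
    simpa [Complex.add_re, Complex.mul_re] using this
  have him : α * x.im + β * y.im = 0 := by
    have := congrArg Complex.im hxy
    simpa [Complex.add_im, Complex.mul_im] using this
  have hgoal : (x * (starRingEnd ℂ) y).im = x.im * y.re - x.re * y.im := by
    simp [Complex.mul_im, Complex.conj_re, Complex.conj_im]
    ring
  rw [hgoal]
  by_cases hα : α = 0
  · have hβ : β ≠ 0 := fun hβ => hne ⟨hα, hβ⟩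
    rw [hα] at hre him
    simp at hre him
    rcases hre with h | h
    · exact absurd h hβ
    rcases him with h' | h'
    · exact absurd h' hβ
    rw [h, h']
    ring
  · have h1 : α * (x.im * y.re - x.re * y.im)
        = (α * x.im) * y.re - (α * x.re) * y.im := by ring
    have h2 : α * x.im = -(β * y.im) := by linarith
    have h3 : α * x.re = -(β * y.re) := by linarith
    have h4 : α * (x.im * y.re - x.re * y.im) = 0 := by
      rw [h1, h2, h3]; ring
    rcases mul_eq_zero.mp h4 with h | h
    · exact absurd h hα
    · exact h

lemma bar_decomp {n : ℕ} (g h : MvPolynomial (Fin n) ℝ) :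
    MvPolynomial.map (starRingEnd ℂ) (mc g + MvPolynomial.C Complex.I * mc h)
      = mc g - MvPolynomial.C Complex.I * mc h := by
  have hg : ∀ p : MvPolynomial (Fin n) ℝ,
      MvPolynomial.map (starRingEnd ℂ) (mc p) = mc p := by
    intro p
    rw [MvPolynomial.map_map,
      show (starRingEnd ℂ).comp (algebraMap ℝ ℂ) = algebraMap ℝ ℂ from
        RingHom.ext (fun x => Complex.conj_ofReal x)]
  rw [map_add, map_mul, hg, hg, MvPolynomial.map_C, Complex.conj_I, map_neg, neg_mul]
  ring

lemma pair_lemma (n : ℕ) (f : MvPolynomial (Fin n) ℂ) (g h : MvPolynomial (Fin n) ℝ)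
    (hgh : f = mc g + MvPolynomial.C Complex.I * mc h)
    (hf : IsStable f) (α β : ℝ) :
    RealStable (α • g + β • h) := by
  rcases hf with hf0 | hfnv
  · -- f = 0
    obtain ⟨hg0, hh0⟩ := decomp_zero g h (by rw [← hgh]; exact hf0)
    rw [hg0, hh0]
    left
    simp
  · by_cases hz : α • g + β • h = 0
    · rw [hz]; left; simp
    · right
      intro w hw hcontra
      set x := MvPolynomial.eval w (mc g) with hx
      set y := MvPolynomial.eval w (mc h) with hy
      have hxy : (α : ℂ) * x + (β : ℂ) * y = 0 := by
        rw [hx, hy, ← eval_mc_combo]; exact hcontra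
      have hfw : MvPolynomial.eval w f = x + Complex.I * y := by
        rw [hgh]; simp [hx, hy]
      have hfw0 : x + Complex.I * y ≠ 0 := by rw [← hfw]; exact hfnv w hw
      have hαβ : ¬(α = 0 ∧ β = 0) := by
        rintro ⟨rfl, rfl⟩
        apply hz; simp
      have hA : (x * (starRingEnd ℂ) y).im = 0 := im_conj_zero hαβ hxy
      have heqabs : ‖x - Complex.I * y‖ = ‖x + Complex.I * y‖ :=
        abs_sub_eq_abs_add hA
      have hfb_eval : MvPolynomial.eval w (MvPolynomial.map (starRingEnd ℂ) f)
          = x - Complex.I * y := by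
        rw [hgh, bar_decomp]
        simp [hx, hy]
      obtain ⟨c, hc1, hceq⟩ := rigidity n f hfnv w hw (by rw [hfb_eval, hfw, heqabs])
      have hkey : mc g - MvPolynomial.C Complex.I * mc h
          = MvPolynomial.C c * (mc g + MvPolynomial.C Complex.I * mc h) := by
        rw [← bar_decomp g h, ← hgh, hceq, hgh]
      by_cases hc : c = 1
      · rw [hc, map_one, one_mul] at hkey
        have h2 : (MvPolynomial.C Complex.I * mc h) * 2 = 0 := by
          linear_combination hgh * 0 - hkey
        have h3 : MvPolynomial.C Complex.I * mc h = 0 := by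
          rcases mul_eq_zero.mp h2 with h | h
          · exact h
          · exact absurd h two_ne_zero
        have h4 : mc h = 0 := by
          rcases mul_eq_zero.mp h3 with h | h
          · exact absurd (MvPolynomial.C_eq_zero.mp h) Complex.I_ne_zero
          · exact h
        have hh0 : h = 0 := mc_inj (by simp [mc, h4])
        have hy0 : y = 0 := by rw [hy, h4, map_zero]
        have hx0 : x ≠ 0 := by
          intro h0
          exact hfw0 (by rw [h0, hy0]; ring)
        have hα : α = 0 := by
          have : (α : ℂ) * x = 0 := by rw [← hxy, hy0]; ring
          rcases mul_eq_zero.mp this with h | h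
          · exact_mod_cast h
          · exact absurd h hx0
        exact hz (by rw [hα, hh0, smul_zero, zero_smul, add_zero])
      · have hc0 : c ≠ 0 := by
          intro h0
          rw [h0] at hc1
          simp at hc1
        have h1c : (1 : ℂ) - c ≠ 0 := sub_ne_zero.mpr (Ne.symm hc)
        have hcc : (starRingEnd ℂ) c = c⁻¹ := by
          have hnc : c * (starRingEnd ℂ) c = 1 := by
            rw [Complex.mul_conj]
            rw [Complex.normSq_eq_norm_sq, hc1]
            norm_num
          field_simp
          linear_combination hnc
        set μ : ℂ := Complex.I * (1 + c) / (1 - c) with hμ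
        have h1c' : (1 : ℂ) - c⁻¹ ≠ 0 := by
          rw [sub_ne_zero]
          intro h0
          exact hc (inv_eq_one.mp h0.symm)
        have hμconj : (starRingEnd ℂ) μ = μ := by
          have hu : c * c⁻¹ = 1 := mul_inv_cancel₀ hc0
          simp only [hμ, map_div₀, map_mul, map_add, map_sub, map_one, Complex.conj_I, hcc]
          rw [div_eq_div_iff h1c' h1c]
          linear_combination 2 * Complex.I * hu
        have hμre : ((μ.re : ℝ) : ℂ) = μ := Complex.conj_eq_iff_re.mp hμconj
        set r : ℝ := μ.re with hrdef
        have hgmu : mc g = MvPolynomial.C μ * mc h := by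
          have h2 : MvPolynomial.C (1 - c) * mc g
              = MvPolynomial.C (Complex.I * (1 + c)) * mc h := by
            rw [map_sub, map_one, map_mul, map_add, map_one]
            linear_combination hkey
          have h3 := congrArg (fun p => MvPolynomial.C ((1 - c)⁻¹) * p) h2
          rw [← mul_assoc, ← mul_assoc, ← map_mul, ← map_mul,
            inv_mul_cancel₀ h1c, map_one, one_mul] at h3
          have hsc : (1 - c)⁻¹ * (Complex.I * (1 + c)) = μ := by
            rw [hμ, div_eq_mul_inv, mul_comm]
          rw [h3, hsc]
        have hgr : g = r • h := mc_inj (by rw [mc_smul, hμre, hgmu])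
        have hxr : x = μ * y := by
          rw [hx, hgmu, map_mul, MvPolynomial.eval_C, ← hy]
        have hy0 : y ≠ 0 := by
          intro h0
          apply hfw0
          rw [hxr, h0]
          ring
        have hcoef : (α : ℂ) * μ + (β : ℂ) = 0 := by
          have h5 : ((α : ℂ) * μ + (β : ℂ)) * y = 0 := by
            rw [← hxy, hxr]; ring
          rcases mul_eq_zero.mp h5 with h | h
          · exact h
          · exact absurd h hy0
        have hcoefr : α * r + β = 0 := by
          have : ((α * r + β : ℝ) : ℂ) = 0 := by
            push_cast
            rw [hμre]
            exact hcoef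
          exact_mod_cast this
        exact hz (by rw [combo_eq_smul r α β g h hgr, hcoefr, zero_smul])

lemma endgame (n : ℕ) (G H : MvPolynomial (Fin n) ℝ)
    (hall : ∀ α β : ℝ, RealStable (α • G + β • H)) :
    IsStable (mc G + MvPolynomial.C Complex.I * mc H) ∨
      IsStable (mc G - MvPolynomial.C Complex.I * mc H) := by
  have hGst : RealStable G := by simpa using hall 1 0
  have hHst : RealStable H := by simpa using hall 0 1
  by_cases hdep : ∃ α β : ℝ, ¬(α = 0 ∧ β = 0) ∧ α • G + β • H = 0
  · obtain ⟨α, β, hne, h0⟩ := hdep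
    by_cases hα : α = 0
    · have hβ : β ≠ 0 := fun hβ => hne ⟨hα, hβ⟩
      have hH0 : H = 0 := by
        rw [hα, zero_smul, zero_add] at h0
        have : H = β⁻¹ • (β • H) := by
          rw [smul_smul, inv_mul_cancel₀ hβ, one_smul]
        rw [this, h0, smul_zero]
      left
      rw [hH0]
      simpa [mc, RealStable] using hGst
    · -- G = r • H with r = -β/α
      have hGr : G = (-β / α) • H := by
        have : α • G = (-β) • H := by
          rw [neg_smul]
          rw [← sub_eq_zero]
          rw [sub_neg_eq_add]
          exact h0
        have h2 := congrArg (fun p => (α⁻¹ : ℝ) • p) this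
        simp only [smul_smul] at h2
        rw [inv_mul_cancel₀ hα, one_smul] at h2
        rw [h2]
        congr 1
        field_simp
      left
      have hGC : mc G = MvPolynomial.C ((-β / α : ℝ) : ℂ) * mc H := by
        rw [hGr, mc_smul]
      rw [hGC]
      have : MvPolynomial.C (((-β / α : ℝ) : ℂ)) * mc H + MvPolynomial.C Complex.I * mc H
          = MvPolynomial.C (((-β / α : ℝ) : ℂ) + Complex.I) * mc H := by
        rw [map_add, add_mul]
      rw [this]
      apply stable_C_mul
      · intro hC
        have := congrArg Complex.im hC
        simp at this
      · exact hHst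
  · push_neg at hdep
    set B : (Fin n → ℂ) → ℝ :=
      fun w => (MvPolynomial.eval w (mc G) * (starRingEnd ℂ) (MvPolynomial.eval w (mc H))).im
      with hB
    have hBne : ∀ w : Fin n → ℂ, (∀ j, 0 < (w j).im) → B w ≠ 0 := by
      intro w hw hB0
      set x := MvPolynomial.eval w (mc G) with hx
      set y := MvPolynomial.eval w (mc H) with hy
      -- find a real dependency (α, β) ≠ 0 with α x + β y = 0
      have hdep2 : ∃ α β : ℝ, ¬(α = 0 ∧ β = 0) ∧ (α : ℂ) * x + (β : ℂ) * y = 0 := by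
        by_cases hy0 : y = 0
        · exact ⟨0, 1, by simp, by simp [hy0]⟩
        · set r : ℝ := (x * (starRingEnd ℂ) y).re / Complex.normSq y with hr
          refine ⟨1, -r, by simp, ?_⟩
          have hxy : x * (starRingEnd ℂ) y = ((x * (starRingEnd ℂ) y).re : ℂ) := by
            apply Complex.ext
            · simp
            · simp only [Complex.ofReal_im]
              exact hB0
          have hns : (Complex.normSq y : ℂ) ≠ 0 := by
            simp only [ne_eq, Complex.ofReal_eq_zero]
            exact fun hn => hy0 (Complex.normSq_eq_zero.mp hn)
          have key : x * (Complex.normSq y : ℂ) = ((x * (starRingEnd ℂ) y).re : ℂ) * y := by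
            rw [← hxy, ← Complex.mul_conj]
            ring
          have hxry : x = (r : ℂ) * y := by
            rw [hr]
            push_cast
            rw [div_mul_eq_mul_div, eq_div_iff hns, key]
          push_cast
          rw [hxry]
          ring
      obtain ⟨α, β, hne, hzero⟩ := hdep2
      have hcombo := hall α β
      have hcombo_ne : α • G + β • H ≠ 0 := hdep α β (fun ha hb => hne ⟨ha, hb⟩)
      rcases hcombo with hc0 | hcnv
      · exact hcombo_ne (mc_inj (by simpa [mc] using hc0))
      · exact hcnv w hw (by rw [eval_mc_combo]; exact hzero)
    -- B is continuous
    have hBcont : Continuous B := by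
      rw [hB]
      exact Complex.continuous_im.comp ((cont_eval n (mc G)).mul
        (continuous_star.comp (cont_eval n (mc H))))
    -- two upper points cannot have opposite signs of B
    have hseg : ∀ w₁ w₂ : Fin n → ℂ, (∀ j, 0 < (w₁ j).im) → (∀ j, 0 < (w₂ j).im) →
        B w₁ < 0 → 0 < B w₂ → False := by
      intro w₁ w₂ h1 h2 hn hp
      set γ : ℝ → (Fin n → ℂ) := fun t => (1 - t) • w₁ + t • w₂ with hγ
      have hγ0 : γ 0 = w₁ := by rw [hγ]; simp
      have hγ1 : γ 1 = w₂ := by rw [hγ]; simp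
      have hγcont : Continuous γ := by
        apply Continuous.add
        · exact ((continuous_const.sub continuous_id).smul continuous_const)
        · exact (continuous_id.smul continuous_const)
      have hmem : ∀ t ∈ Set.Icc (0:ℝ) 1, ∀ j, 0 < ((γ t) j).im := by
        intro t ht j
        have him : ((γ t) j).im = (1 - t) * (w₁ j).im + t * (w₂ j).im := by
          simp only [hγ, Pi.add_apply, Pi.smul_apply, Complex.add_im, Complex.real_smul,
            Complex.mul_im, Complex.ofReal_re, Complex.ofReal_im]
          ring
        rw [him]
        rcases eq_or_lt_of_le ht.1 with hteq | htpos
        · rw [← hteq]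
          simpa using h1 j
        · nlinarith [h1 j, h2 j, ht.2]
      have hIVT := intermediate_value_Icc (le_of_lt (zero_lt_one (α := ℝ)))
        ((hBcont.comp hγcont).continuousOn)
      have h0mem : (0:ℝ) ∈ Set.Icc ((B ∘ γ) 0) ((B ∘ γ) 1) := by
        constructor
        · simp only [Function.comp_apply, hγ0]
          exact le_of_lt hn
        · simp only [Function.comp_apply, hγ1]
          exact le_of_lt hp
      obtain ⟨t, ht, hBt⟩ := hIVT h0mem
      exact hBne (γ t) (hmem t ht) hBt
    set w₀ : Fin n → ℂ := fun _ => Complex.I with hw₀def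
    have hw₀ : ∀ j, 0 < (w₀ j).im := by
      intro j
      simp [hw₀def]
    have hsign : (∀ w : Fin n → ℂ, (∀ j, 0 < (w j).im) → 0 < B w) ∨
        (∀ w : Fin n → ℂ, (∀ j, 0 < (w j).im) → B w < 0) := by
      rcases lt_or_gt_of_ne (hBne w₀ hw₀) with h₀neg | h₀pos
      · right
        intro w hw
        rcases lt_or_gt_of_ne (hBne w hw) with hlt | hgt
        · exact hlt
        · exact (hseg w₀ w hw₀ hw h₀neg hgt).elim
      · left
        intro w hw
        rcases lt_or_gt_of_ne (hBne w hw) with hlt | hgt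
        · exact (hseg w w₀ hw hw₀ hlt h₀pos).elim
        · exact hgt
    rcases hsign with hposall | hnegall
    · left
      right
      intro w hw heval0
      set x := MvPolynomial.eval w (mc G) with hx
      set y := MvPolynomial.eval w (mc H) with hy
      have hxy : x + Complex.I * y = 0 := by
        rw [hx, hy]
        simpa using heval0
      have hxval : x = -Complex.I * y := by linear_combination hxy
      have hBw : B w = -Complex.normSq y := by
        rw [hB]
        simp only [← hx, ← hy, hxval]
        have : -Complex.I * y * (starRingEnd ℂ) y = -Complex.I * (Complex.normSq y : ℂ) := by
          rw [mul_assoc, Complex.mul_conj]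
        rw [this]
        simp
      have := hposall w hw
      rw [hBw] at this
      nlinarith [Complex.normSq_nonneg y]
    · right
      right
      intro w hw heval0
      set x := MvPolynomial.eval w (mc G) with hx
      set y := MvPolynomial.eval w (mc H) with hy
      have hxy : x - Complex.I * y = 0 := by
        rw [hx, hy]
        simpa using heval0
      have hxval : x = Complex.I * y := by linear_combination hxy
      have hBw : B w = Complex.normSq y := by
        rw [hB]
        simp only [← hx, ← hy, hxval]
        have : Complex.I * y * (starRingEnd ℂ) y = Complex.I * (Complex.normSq y : ℂ) := by
          rw [mul_assoc, Complex.mul_conj]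
        rw [this]
        simp
      have := hnegall w hw
      rw [hBw] at this
      nlinarith [Complex.normSq_nonneg y]
end BBhelper

/-- If `T : ℝ[z] → ℝ[z]` is a linear transformation preserving real stability,
and a stable `f ∈ ℂ[z]` is written (uniquely) as `f = g + i h` with
`g, h ∈ ℝ[z]`, then either `T_ℂ(f) = T(g) + i T(h)` is stable, or
`T̂_ℂ(f) = T(g) - i T(h)` is stable. -/
theorem complexified_preserver (n : ℕ)
    (T : MvPolynomial (Fin n) ℝ →ₗ[ℝ] MvPolynomial (Fin n) ℝ)
    (hT : ∀ p : MvPolynomial (Fin n) ℝ, RealStable p → RealStable (T p))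
    (f : MvPolynomial (Fin n) ℂ) (g h : MvPolynomial (Fin n) ℝ)
    (hgh : f = MvPolynomial.map (algebraMap ℝ ℂ) g +
      MvPolynomial.C Complex.I * MvPolynomial.map (algebraMap ℝ ℂ) h)
    (hf : IsStable f) :
    IsStable (MvPolynomial.map (algebraMap ℝ ℂ) (T g) +
        MvPolynomial.C Complex.I * MvPolynomial.map (algebraMap ℝ ℂ) (T h)) ∨
      IsStable (MvPolynomial.map (algebraMap ℝ ℂ) (T g) -
        MvPolynomial.C Complex.I * MvPolynomial.map (algebraMap ℝ ℂ) (T h)) := by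
  have hall : ∀ α β : ℝ, RealStable (α • T g + β • T h) := by
    intro α β
    have h1 := BBhelper.pair_lemma n f g h hgh hf α β
    have h2 := hT _ h1
    have h3 : T (α • g + β • h) = α • T g + β • T h := by
      rw [map_add, map_smul, map_smul]
    rwa [h3] at h2
  exact BBhelper.endgame n (T g) (T h) hall
end

section
/- The multivariate Eulerian polynomial Σ_{σ ∈ S_n} ∏_{i : σ(i) > i} y_{σ(i)} (the sum over all permutations σ of {1,…,n} of the product of y_{σ(i)} over the excedances of σ) is a real stable polynomial in y_1,…,y_n, and it equals Σ_{σ ∈ S_n} ∏_{i : σ(i) > σ(i+1)} y_{σ(i)} (product over descent positions 1 ≤ i ≤ n−1 of the descent tops). -/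
open MvPolynomial

/-- The multivariate Eulerian polynomial `Σ_{σ ∈ S_n} Π_{i : σ(i) > i} y_{σ(i)}`
(product over the excedances of `σ`). -/
noncomputable def mvEulerianExc (n : ℕ) : MvPolynomial (Fin n) ℝ :=
  ∑ σ : Equiv.Perm (Fin n),
    ∏ i ∈ Finset.univ.filter (fun i : Fin n => i < σ i), MvPolynomial.X (σ i)

/-- The same polynomial written via descents:
`Σ_{σ ∈ S_n} Π_{i : σ(i) > σ(i+1)} y_{σ(i)}` (product over descent tops). -/
noncomputable def mvEulerianDes (n : ℕ) : MvPolynomial (Fin n) ℝ :=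
  ∑ σ : Equiv.Perm (Fin n),
    ∏ i : Fin n,
      if h : (i : ℕ) + 1 < n then
        (if σ ⟨(i : ℕ) + 1, h⟩ < σ i then MvPolynomial.X (σ i) else 1)
      else 1

open Finset Equiv Fin

namespace MvEulerianAux


/-- descent at position `i`: `σ (i+1) < σ i`. -/
def dscAt {n : ℕ} (σ : Perm (Fin n)) (i : Fin n) : Prop :=
  ∃ h : (i : ℕ) + 1 < n, σ ⟨(i : ℕ) + 1, h⟩ < σ i

instance {n : ℕ} (σ : Perm (Fin n)) (i : Fin n) : Decidable (dscAt σ i) :=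
  if h : (i : ℕ) + 1 < n then
    decidable_of_iff (σ ⟨(i : ℕ) + 1, h⟩ < σ i) ⟨fun hh => ⟨h, hh⟩, fun ⟨_, hh⟩ => hh⟩
  else isFalse (fun ⟨hh, _⟩ => h hh)

lemma dscAt_last {n : ℕ} (σ : Perm (Fin n)) (i : Fin n) (h : (i : ℕ) + 1 = n) :
    ¬ dscAt σ i := fun ⟨hh, _⟩ => by omega

section evals
variable {R : Type*} [CommRing R]

/-- evaluation of the homogenized excedance polynomial -/
def homEval (n : ℕ) (x : Fin n → R) (y : R) : R :=
  ∑ σ : Perm (Fin n), ∏ i : Fin n, (if i < σ i then x (σ i) else y)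

def brkEval (n : ℕ) (x : Fin n → R) (y : R) : R :=
  ∑ σ : Perm (Fin n), ∑ j : Fin n, ∏ i ∈ univ.erase j, (if i < σ i then x (σ i) else y)

def desEval (n : ℕ) (x : Fin n → R) : R :=
  ∑ σ : Perm (Fin n), ∏ i : Fin n, (if dscAt σ i then x (σ i) else 1)

def dPunct (n : ℕ) (x : Fin n → R) : R :=
  ∑ σ : Perm (Fin n), ∑ j : Fin n, ∏ i ∈ univ.erase j, (if dscAt σ i then x (σ i) else 1)

end evals

/-! ### permutation infrastructure -/

/-- extend a permutation of `Fin n` to `Fin (n+1)` fixing `last n`. -/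
def ext {n : ℕ} (σ : Perm (Fin n)) : Perm (Fin (n + 1)) :=
  finSuccEquivLast.symm.permCongr σ.optionCongr

@[simp] lemma ext_castSucc {n : ℕ} (σ : Perm (Fin n)) (i : Fin n) :
    ext σ (castSucc i) = castSucc (σ i) := by
  simp [ext, Equiv.permCongr_apply, finSuccEquivLast_castSucc, finSuccEquivLast_symm_some]

@[simp] lemma ext_last {n : ℕ} (σ : Perm (Fin n)) : ext σ (last n) = last n := by
  simp [ext, Equiv.permCongr_apply, finSuccEquivLast_last]

lemma ext_injective {n : ℕ} : Function.Injective (ext (n := n)) := by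
  intro e e' h
  ext i
  have := congrArg (fun π : Perm (Fin (n+1)) => π (castSucc i)) h
  have h2 : e i = e' i := by simpa [Fin.castSucc_inj] using this
  exact congrArg Fin.val h2

/-- the "insertion" permutation: `i ↦ i` for `i < k`, `k ↦ last`, `i ↦ i - 1` for `i > k`. -/
def insPerm {n : ℕ} (k : Fin (n + 1)) : Perm (Fin (n + 1)) :=
  (revPerm.trans (k.rev.cycleRange)).trans revPerm

lemma insPerm_apply_lt {n : ℕ} {k i : Fin (n + 1)} (h : i < k) : insPerm k i = i := by
  have : k.rev < i.rev := rev_lt_rev.mpr h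
  simp [insPerm, cycleRange_of_gt this]

@[simp] lemma insPerm_apply_self {n : ℕ} (k : Fin (n + 1)) : insPerm k k = last n := by
  simp [insPerm, cycleRange_self]

lemma insPerm_apply_succ {n : ℕ} {k : Fin (n + 1)} {j : Fin n} (h : k ≤ castSucc j) :
    insPerm k (succ j) = castSucc j := by
  have h1 : rev (succ j) < k.rev := by
    rw [rev_succ]
    exact lt_of_le_of_lt (castSucc_le_castSucc_iff.mpr (le_refl _)) (by
      have := rev_le_rev.mpr h
      rw [rev_castSucc] at this
      exact lt_of_lt_of_le castSucc_lt_succ this)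
  have : (castSucc (rev j)) + 1 = succ (rev j) := by
    rw [← Fin.coeSucc_eq_succ]
  simp only [insPerm, Equiv.trans_apply, revPerm_apply, rev_succ]
  rw [cycleRange_of_lt (by rwa [rev_succ] at h1), this, rev_succ, rev_rev]


/-! ### bijections on `Perm (Fin (n+1))` -/

lemma card_eq (n : ℕ) :
    Fintype.card (Fin (n + 1) × Perm (Fin n)) = Fintype.card (Perm (Fin (n + 1))) := by
  simp [Fintype.card_perm, Nat.factorial_succ]

lemma swap_bij (n : ℕ) :
    Function.Bijective (fun pe : Fin (n + 1) × Perm (Fin n) =>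
      Equiv.swap (last n) pe.1 * ext pe.2) := by
  rw [Fintype.bijective_iff_injective_and_card]
  refine ⟨?_, card_eq n⟩
  rintro ⟨p, e⟩ ⟨p', e'⟩ h
  simp only at h
  have hp : p = p' := by
    have h1 := congrArg (fun π : Perm (Fin (n+1)) => π (last n)) h
    simpa [Equiv.Perm.mul_apply, Equiv.swap_apply_left] using h1
  subst hp
  have : ext e = ext e' := by
    have := mul_left_cancel h
    exact this
  rw [ext_injective this]

lemma ins_bij (n : ℕ) :
    Function.Bijective (fun sk : Perm (Fin n) × Fin (n + 1) =>
      ext sk.1 * insPerm sk.2) := by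
  rw [Fintype.bijective_iff_injective_and_card]
  constructor
  · rintro ⟨σ, k⟩ ⟨σ', k'⟩ h
    simp only at h
    have hklast : (ext σ * insPerm k) k = last n := by
      simp [Equiv.Perm.mul_apply]
    have hklast' : (ext σ' * insPerm k') k' = last n := by
      simp [Equiv.Perm.mul_apply]
    have hk : k = k' := by
      apply (ext σ * insPerm k).injective
      rw [hklast, h, hklast']
    subst hk
    have : ext σ = ext σ' := mul_right_cancel h
    rw [ext_injective this]
  · simp [Fintype.card_perm, Nat.factorial_succ, mul_comm]

lemma sum_perm_swap {M : Type*} [AddCommMonoid M] (n : ℕ) (f : Perm (Fin (n + 1)) → M) :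
    ∑ π : Perm (Fin (n + 1)), f π
      = ∑ p : Fin (n + 1), ∑ e : Perm (Fin n), f (Equiv.swap (last n) p * ext e) := by
  have h := Fintype.sum_bijective _ (swap_bij n) _ f (fun pe => rfl)
  rw [← h, Fintype.sum_prod_type]

lemma sum_perm_ins {M : Type*} [AddCommMonoid M] (n : ℕ) (f : Perm (Fin (n + 1)) → M) :
    ∑ π : Perm (Fin (n + 1)), f π
      = ∑ σ : Perm (Fin n), ∑ k : Fin (n + 1), f (ext σ * insPerm k) := by
  have h := Fintype.sum_bijective _ (ins_bij n) _ f (fun sk => rfl)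
  rw [← h, Fintype.sum_prod_type]


/-! ### the swap-side (excedance) recursion -/

section swapSide
variable {R : Type*} [CommRing R]

lemma prodW_last (n : ℕ) (x : Fin (n + 1) → R) (y : R) (e : Perm (Fin n)) :
    (∏ i : Fin (n + 1), (if i < ext e i then x (ext e i) else y))
      = y * ∏ i : Fin n, (if i < e i then x (castSucc (e i)) else y) := by
  rw [Fin.prod_univ_castSucc]
  have hlast : ¬ (last n < ext e (last n)) := by
    rw [ext_last]; exact lt_irrefl _
  rw [if_neg hlast, mul_comm]
  congr 1
  apply Finset.prod_congr rfl
  intro i _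
  rw [ext_castSucc]
  simp only [Fin.castSucc_lt_castSucc_iff]

lemma prodW_cs (n : ℕ) (x : Fin (n + 1) → R) (y : R) (c : Fin n) (e : Perm (Fin n)) :
    (∏ i : Fin (n + 1),
        (if i < (Equiv.swap (last n) (castSucc c) * ext e) i
          then x ((Equiv.swap (last n) (castSucc c) * ext e) i) else y))
      = y * (x (last n) *
          ∏ i ∈ univ.erase (e⁻¹ c), (if i < e i then x (castSucc (e i)) else y)) := by
  set π := Equiv.swap (last n) (castSucc c) * ext e with hπ
  have hlastv : π (last n) = castSucc c := by
    simp [hπ, Equiv.Perm.mul_apply, Equiv.swap_apply_left]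
  have hcs : ∀ i : Fin n, π (castSucc i) = if e i = c then last n else castSucc (e i) := by
    intro i
    by_cases h : e i = c
    · simp [hπ, Equiv.Perm.mul_apply, h, Equiv.swap_apply_right]
    · rw [hπ, Equiv.Perm.mul_apply, ext_castSucc,
        Equiv.swap_apply_of_ne_of_ne (castSucc_lt_last _).ne
          (fun hh => h (Fin.castSucc_injective _ hh)), if_neg h]
  rw [Fin.prod_univ_castSucc]
  have h1 : ¬ (last n < π (last n)) := by
    rw [hlastv]; exact (castSucc_lt_last c).asymm
  rw [if_neg h1, mul_comm]
  congr 1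
  have key : ∀ i : Fin n, (if castSucc i < π (castSucc i) then x (π (castSucc i)) else y)
      = if i = e⁻¹ c then x (last n) else (if i < e i then x (castSucc (e i)) else y) := by
    intro i
    by_cases h : e i = c
    · have hi : i = e⁻¹ c := by rw [← h]; simp
      rw [hcs, if_pos h, if_pos hi, if_pos (castSucc_lt_last i)]
    · have hi : ¬ i = e⁻¹ c := fun hh => h (by rw [hh]; simp)
      rw [hcs, if_neg h, if_neg hi]
      simp only [Fin.castSucc_lt_castSucc_iff]
  rw [Finset.prod_congr rfl (fun i _ => key i),
    ← Finset.mul_prod_erase univ _ (mem_univ (e⁻¹ c)), if_pos rfl]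
  congr 1
  apply Finset.prod_congr rfl
  intro i hi
  rw [if_neg (Finset.ne_of_mem_erase hi)]

theorem homEval_rec (n : ℕ) (x : Fin (n + 1) → R) (y : R) :
    homEval (n + 1) x y
      = y * homEval n (x ∘ castSucc) y
        + x (last n) * y * brkEval n (x ∘ castSucc) y := by
  rw [homEval, sum_perm_swap, Fin.sum_univ_castSucc]
  have hlastpart : (∑ e : Perm (Fin n),
      ∏ i : Fin (n + 1),
        (if i < (Equiv.swap (last n) (last n) * ext e) i
          then x ((Equiv.swap (last n) (last n) * ext e) i) else y))
      = y * homEval n (x ∘ castSucc) y := by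
    rw [homEval, Finset.mul_sum]
    apply Finset.sum_congr rfl
    intro e _
    rw [Equiv.swap_self]
    have : (Equiv.refl (Fin (n+1)) : Perm (Fin (n+1))) * ext e = ext e := one_mul _
    rw [this, prodW_last]
    rfl
  rw [hlastpart]
  have hmain : (∑ c : Fin n, ∑ e : Perm (Fin n),
      ∏ i : Fin (n + 1),
        (if i < (Equiv.swap (last n) (castSucc c) * ext e) i
          then x ((Equiv.swap (last n) (castSucc c) * ext e) i) else y))
      = x (last n) * y * brkEval n (x ∘ castSucc) y := by
    rw [Finset.sum_comm, brkEval, Finset.mul_sum]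
    apply Finset.sum_congr rfl
    intro e _
    have hW : ∀ c : Fin n, (∏ i : Fin (n + 1),
        (if i < (Equiv.swap (last n) (castSucc c) * ext e) i
          then x ((Equiv.swap (last n) (castSucc c) * ext e) i) else y))
        = x (last n) * y * ∏ i ∈ univ.erase (e⁻¹ c),
            (if i < e i then (x ∘ castSucc) (e i) else y) := by
      intro c
      rw [prodW_cs]
      ring_nf
      rfl
    rw [Finset.sum_congr rfl (fun c _ => hW c), ← Finset.mul_sum]
    congr 1
    rw [← Equiv.sum_comp e (fun c => ∏ i ∈ univ.erase (e⁻¹ c),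
        (if i < e i then (x ∘ castSucc) (e i) else y))]
    apply Finset.sum_congr rfl
    intro j _
    simp
  rw [hmain, add_comm]

end swapSide


/-! ### the insertion-side (descent) recursion -/

lemma dscAt_iff {n : ℕ} (σ : Perm (Fin n)) (i : Fin n) (h : (i : ℕ) + 1 < n) :
    dscAt σ i ↔ σ ⟨(i : ℕ) + 1, h⟩ < σ i :=
  ⟨fun ⟨_, hh⟩ => hh, fun hh => ⟨h, hh⟩⟩

lemma dscAt_false {n : ℕ} (σ : Perm (Fin n)) (i : Fin n) (h : ¬ ((i : ℕ) + 1 < n)) :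
    ¬ dscAt σ i := fun ⟨hh, _⟩ => h hh

section insSide
variable {R : Type*} [CommRing R]

lemma factorA {n : ℕ} (π : Perm (Fin (n + 1))) (σ : Perm (Fin n)) (x : Fin (n + 1) → R)
    (j : Fin n) (p : Fin (n + 1)) (hjn : (j : ℕ) + 1 < n) (h1 : (p : ℕ) + 1 < n + 1)
    (hcur : π p = castSucc (σ j))
    (hnext : π ⟨(p : ℕ) + 1, h1⟩ = castSucc (σ ⟨(j : ℕ) + 1, hjn⟩)) :
    (if dscAt π p then x (π p) else 1)
      = (if dscAt σ j then x (castSucc (σ j)) else 1) := by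
  have hiff : dscAt π p ↔ dscAt σ j := by
    rw [dscAt_iff π p h1, dscAt_iff σ j hjn, hnext, hcur, castSucc_lt_castSucc_iff]
  rw [if_congr hiff rfl rfl, hcur]

lemma factorLast {n : ℕ} (π : Perm (Fin (n + 1))) (x : Fin (n + 1) → R)
    (p : Fin (n + 1)) (hp : (p : ℕ) + 1 = n + 1) :
    (if dscAt π p then x (π p) else 1) = 1 :=
  if_neg (dscAt_false _ _ (by omega))

lemma factorBeforeTop {n : ℕ} (π : Perm (Fin (n + 1))) (x : Fin (n + 1) → R)
    (p : Fin (n + 1)) (w : Fin n) (hpn : (p : ℕ) + 1 < n + 1)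
    (hnext : π ⟨(p : ℕ) + 1, hpn⟩ = last n) (hcur : π p = castSucc w) :
    (if dscAt π p then x (π p) else 1) = 1 := by
  apply if_neg
  rw [dscAt_iff π p hpn, hnext, hcur]
  exact (castSucc_lt_last w).asymm

lemma prodInsert (n : ℕ) (x : Fin (n + 1) → R) (σ : Perm (Fin n)) (k : Fin (n + 1)) :
    (∏ i : Fin (n + 1),
        (if dscAt (ext σ * insPerm k) i then x ((ext σ * insPerm k) i) else 1))
      = (if k = last n then 1 else x (last n))
        * ∏ j : Fin n, (if (j : ℕ) + 1 = (k : ℕ) then 1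
            else (if dscAt σ j then x (castSucc (σ j)) else 1)) := by
  set π := ext σ * insPerm k with hπ
  -- values of π
  have v1 : ∀ j : Fin n, ((j : ℕ) < (k : ℕ)) → π (castSucc j) = castSucc (σ j) := by
    intro j hj
    rw [hπ, Equiv.Perm.mul_apply, insPerm_apply_lt (by simpa [Fin.lt_def] using hj),
      ext_castSucc]
  have v2 : π k = last n := by
    rw [hπ, Equiv.Perm.mul_apply, insPerm_apply_self, ext_last]
  have v3 : ∀ j : Fin n, ((k : ℕ) ≤ (j : ℕ)) → π (succ j) = castSucc (σ j) := by
    intro j hj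
    rw [hπ, Equiv.Perm.mul_apply, insPerm_apply_succ (by simpa [Fin.le_def] using hj),
      ext_castSucc]
  -- the slot equivalence
  set E : Option (Fin n) ≃ Fin (n + 1) := finSuccEquivLast.symm.trans (insPerm k).symm with hE
  have hEnone : E none = k := by
    show (insPerm k).symm (finSuccEquivLast.symm none) = k
    rw [finSuccEquivLast_symm_none]
    exact ((insPerm k).symm_apply_eq).mpr (insPerm_apply_self k).symm
  have hEsome_lt : ∀ j : Fin n, ((j : ℕ) < (k : ℕ)) → E (some j) = castSucc j := by
    intro j hj
    show (insPerm k).symm (finSuccEquivLast.symm (some j)) = castSucc j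
    rw [finSuccEquivLast_symm_some]
    exact ((insPerm k).symm_apply_eq).mpr (insPerm_apply_lt (by simpa [Fin.lt_def] using hj)).symm
  have hEsome_ge : ∀ j : Fin n, ((k : ℕ) ≤ (j : ℕ)) → E (some j) = succ j := by
    intro j hj
    show (insPerm k).symm (finSuccEquivLast.symm (some j)) = succ j
    rw [finSuccEquivLast_symm_some]
    exact ((insPerm k).symm_apply_eq).mpr (insPerm_apply_succ (by simpa [Fin.le_def] using hj)).symm
  -- reindex the product
  rw [← Fintype.prod_equiv E
    (fun o => if dscAt π (E o) then x (π (E o)) else 1)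
    (fun i => if dscAt π i then x (π i) else 1) (fun o => rfl),
    Fintype.prod_option, hEnone]
  -- the factor at `none`
  have Fk : (if dscAt π k then x (π k) else 1) = (if k = last n then 1 else x (last n)) := by
    by_cases hk : k = last n
    · rw [if_pos hk]
      apply factorLast
      rw [hk, val_last]
    · rw [if_neg hk]
      have hkn : (k : ℕ) < n := by
        have h1 : (k : ℕ) ≠ n := fun hh => hk (Fin.ext (by simp [hh]))
        have h2 : (k : ℕ) < n + 1 := k.isLt
        omega
      have hd : dscAt π k := by
        refine ⟨by omega, ?_⟩
        have hs : (⟨(k : ℕ) + 1, by omega⟩ : Fin (n + 1)) = succ ⟨(k : ℕ), hkn⟩ := rfl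
        rw [hs, v3 ⟨(k : ℕ), hkn⟩ (le_refl _), v2]
        exact castSucc_lt_last _
      rw [if_pos hd, v2]
  rw [Fk]
  congr 1
  -- factors at `some j`
  apply Finset.prod_congr rfl
  intro j _
  by_cases hlt : (j : ℕ) < (k : ℕ)
  · rw [hEsome_lt j hlt]
    by_cases heq : (j : ℕ) + 1 = (k : ℕ)
    · rw [if_pos heq]
      refine factorBeforeTop π x (castSucc j) (σ j)
        (by simp only [Fin.coe_castSucc]; omega) ?_ (v1 j hlt)
      have hs : (⟨((castSucc j : Fin (n + 1)) : ℕ) + 1,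
          by simp only [Fin.coe_castSucc]; omega⟩ : Fin (n + 1)) = k :=
        Fin.ext (by simpa using heq)
      rw [hs, v2]
    · rw [if_neg heq]
      have hjn : (j : ℕ) + 1 < n := by
        have : (k : ℕ) < n + 1 := k.isLt
        omega
      refine factorA π σ x j (castSucc j) hjn (by simp only [Fin.coe_castSucc]; omega) (v1 j hlt) ?_
      have hs : (⟨((castSucc j : Fin (n + 1)) : ℕ) + 1,
          by simp only [Fin.coe_castSucc]; omega⟩ : Fin (n + 1))
          = castSucc ⟨(j : ℕ) + 1, hjn⟩ := Fin.ext (by simp)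
      rw [hs]
      exact v1 ⟨(j : ℕ) + 1, hjn⟩ (by simp only [Fin.val_mk]; omega)
  · have hge : (k : ℕ) ≤ (j : ℕ) := not_lt.mp hlt
    rw [hEsome_ge j hge]
    have hne : ¬ ((j : ℕ) + 1 = (k : ℕ)) := by omega
    rw [if_neg hne]
    by_cases hjn : (j : ℕ) + 1 < n
    · refine factorA π σ x j (succ j) hjn (by simp only [Fin.val_succ]; omega) (v3 j hge) ?_
      have hs : (⟨((succ j : Fin (n + 1)) : ℕ) + 1,
          by simp only [Fin.val_succ]; omega⟩ : Fin (n + 1))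
          = succ ⟨(j : ℕ) + 1, hjn⟩ := Fin.ext (by simp)
      rw [hs]
      exact v3 ⟨(j : ℕ) + 1, hjn⟩ (by simp only [Fin.val_mk]; omega)
    · have hjl : (j : ℕ) + 1 = n := by
        have := j.isLt
        omega
      rw [if_neg (dscAt_false σ j (by omega)), factorLast π x (succ j) (by simp only [Fin.val_succ]; omega)]

lemma prod_ite_eq_erase' (n : ℕ) (dw : Fin n → R) (j₀ : Fin n) :
    (∏ j : Fin n, (if j = j₀ then 1 else dw j)) = ∏ j ∈ univ.erase j₀, dw j := by
  rw [← Finset.mul_prod_erase univ (fun j => if j = j₀ then 1 else dw j) (mem_univ j₀),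
    if_pos rfl, one_mul]
  apply Finset.prod_congr rfl
  intro j hj
  rw [if_neg (Finset.ne_of_mem_erase hj)]

lemma sum_punct (n : ℕ) (dw : Fin n → R) (hlast : ∀ j : Fin n, (j : ℕ) + 1 = n → dw j = 1) :
    (∑ c : Fin n, ∏ j : Fin n, (if (j : ℕ) + 1 = (c : ℕ) then 1 else dw j))
      = ∑ j₀ : Fin n, ∏ j ∈ univ.erase j₀, dw j := by
  cases n with
  | zero => simp
  | succ m =>
    rw [← Equiv.sum_comp (Equiv.addRight (1 : Fin (m + 1)))
      (fun c => ∏ j : Fin (m + 1), (if (j : ℕ) + 1 = (c : ℕ) then 1 else dw j))]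
    apply Finset.sum_congr rfl
    intro j₀ _
    simp only [Equiv.coe_addRight]
    by_cases hj : (j₀ : ℕ) + 1 < m + 1
    · have hval : ((j₀ + 1 : Fin (m + 1)) : ℕ) = (j₀ : ℕ) + 1 := by
        rw [Fin.val_add_one, if_neg (fun hh : j₀ = last m => by
          rw [hh, val_last] at hj; omega)]
      rw [← prod_ite_eq_erase' (m + 1) dw j₀]
      apply Finset.prod_congr rfl
      intro j _
      simp only [hval]
      exact if_congr (by rw [Fin.ext_iff]; omega) rfl rfl
    · have hlastj : (j₀ : ℕ) + 1 = m + 1 := by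
        have := j₀.isLt
        omega
      have hval : ((j₀ + 1 : Fin (m + 1)) : ℕ) = 0 := by
        rw [Fin.val_add_one, if_pos (Fin.ext (by rw [val_last]; omega))]
      have hstep : (∏ j : Fin (m + 1), (if (j : ℕ) + 1 = ((j₀ + 1 : Fin (m + 1)) : ℕ)
          then 1 else dw j)) = ∏ j : Fin (m + 1), dw j := by
        apply Finset.prod_congr rfl
        intro j _
        simp only [hval]
        rw [if_neg (by omega)]
      refine Eq.trans hstep ?_
      rw [← Finset.mul_prod_erase univ dw (mem_univ j₀), hlast j₀ hlastj, one_mul]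

theorem desEval_rec (n : ℕ) (x : Fin (n + 1) → R) :
    desEval (n + 1) x
      = desEval n (x ∘ castSucc) + x (last n) * dPunct n (x ∘ castSucc) := by
  rw [desEval, sum_perm_ins]
  have key : ∀ σ : Perm (Fin n),
      (∑ k : Fin (n + 1), ∏ i : Fin (n + 1),
        (if dscAt (ext σ * insPerm k) i then x ((ext σ * insPerm k) i) else 1))
      = (∏ j : Fin n, (if dscAt σ j then x (castSucc (σ j)) else 1))
        + x (last n) * ∑ j₀ : Fin n, ∏ j ∈ univ.erase j₀,
            (if dscAt σ j then x (castSucc (σ j)) else 1) := by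
    intro σ
    rw [Finset.sum_congr rfl (fun k _ => prodInsert n x σ k), Fin.sum_univ_castSucc]
    have hlastterm : (if (last n : Fin (n + 1)) = last n then (1 : R) else x (last n))
        * (∏ j : Fin n, (if (j : ℕ) + 1 = ((last n : Fin (n + 1)) : ℕ) then 1
            else (if dscAt σ j then x (castSucc (σ j)) else 1)))
        = ∏ j : Fin n, (if dscAt σ j then x (castSucc (σ j)) else 1) := by
      rw [if_pos rfl, one_mul]
      apply Finset.prod_congr rfl
      intro j _
      by_cases hj : (j : ℕ) + 1 = n
      · rw [if_pos (by rw [val_last]; exact hj), if_neg (dscAt_last σ j hj)]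
      · rw [if_neg (by rw [val_last]; exact hj)]
    have hmain : (∑ c : Fin n, (if castSucc c = last n then (1 : R) else x (last n))
        * ∏ j : Fin n, (if (j : ℕ) + 1 = ((castSucc c : Fin (n + 1)) : ℕ) then 1
            else (if dscAt σ j then x (castSucc (σ j)) else 1)))
        = x (last n) * ∑ j₀ : Fin n, ∏ j ∈ univ.erase j₀,
            (if dscAt σ j then x (castSucc (σ j)) else 1) := by
      have h1 : ∀ c : Fin n, (if castSucc c = last n then (1 : R) else x (last n))
          * (∏ j : Fin n, (if (j : ℕ) + 1 = ((castSucc c : Fin (n + 1)) : ℕ) then 1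
            else (if dscAt σ j then x (castSucc (σ j)) else 1)))
          = x (last n) * ∏ j : Fin n, (if (j : ℕ) + 1 = (c : ℕ) then 1
            else (if dscAt σ j then x (castSucc (σ j)) else 1)) := by
        intro c
        rw [if_neg (castSucc_lt_last c).ne]
        congr 1
      rw [Finset.sum_congr rfl (fun c _ => h1 c), ← Finset.mul_sum]
      congr 1
      exact sum_punct n (fun j => if dscAt σ j then x (castSucc (σ j)) else 1)
        (fun j hj => if_neg (dscAt_last σ j hj))
    rw [hlastterm, hmain, add_comm]
  rw [Finset.sum_congr rfl (fun σ _ => key σ), Finset.sum_add_distrib, ← Finset.mul_sum]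
  rfl

end insSide

/-! ### equality of the two statistics -/

section equality
variable {R : Type*} [CommRing R]

lemma punct_eq_sum_update (n : ℕ) (x : Fin n → R) (P : Perm (Fin n) → Fin n → Prop)
    [∀ σ i, Decidable (P σ i)] :
    (∑ σ : Perm (Fin n), ∑ j : Fin n, ∏ i ∈ univ.erase j, (if P σ i then x (σ i) else 1))
      = ∑ v : Fin n, ∑ σ : Perm (Fin n),
          ∏ i : Fin n, (if P σ i then (Function.update x v 1) (σ i) else 1) := by
  conv_rhs => rw [Finset.sum_comm]
  apply Finset.sum_congr rfl
  intro σ _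
  rw [← Equiv.sum_comp σ
    (fun v => ∏ i : Fin n, (if P σ i then (Function.update x v 1) (σ i) else 1))]
  apply Finset.sum_congr rfl
  intro j _
  symm
  rw [← Finset.mul_prod_erase univ _ (mem_univ j)]
  have hfj : (if P σ j then Function.update x (σ j) 1 (σ j) else 1) = 1 := by
    by_cases h : P σ j
    · rw [if_pos h, Function.update_self]
    · rw [if_neg h]
  rw [hfj, one_mul]
  apply Finset.prod_congr rfl
  intro i hi
  have hne : σ i ≠ σ j := fun hh => (Finset.ne_of_mem_erase hi) (σ.injective hh)
  by_cases h : P σ i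
  · rw [if_pos h, if_pos h, Function.update_of_ne hne]
  · rw [if_neg h, if_neg h]

theorem exc_eq_des : ∀ (n : ℕ) (x : Fin n → R), homEval n x 1 = desEval n x := by
  intro n
  induction n with
  | zero =>
    intro x
    simp [homEval, desEval]
  | succ n ih =>
    intro x
    rw [homEval_rec, desEval_rec]
    have hb : brkEval n (x ∘ castSucc) (1 : R) = dPunct n (x ∘ castSucc) := by
      rw [show brkEval n (x ∘ castSucc) (1 : R)
          = ∑ σ : Perm (Fin n), ∑ j : Fin n, ∏ i ∈ univ.erase j,
              (if i < σ i then (x ∘ castSucc) (σ i) else 1) from rfl,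
        punct_eq_sum_update n (x ∘ castSucc) (fun σ i => i < σ i),
        show dPunct n (x ∘ castSucc)
          = ∑ σ : Perm (Fin n), ∑ j : Fin n, ∏ i ∈ univ.erase j,
              (if dscAt σ i then (x ∘ castSucc) (σ i) else 1) from rfl,
        punct_eq_sum_update n (x ∘ castSucc) (fun σ i => dscAt σ i)]
      apply Finset.sum_congr rfl
      intro v _
      exact ih (Function.update (x ∘ castSucc) v 1)
    rw [ih, hb]
    ring

end equality

/-! ### analytic part -/

section analytic
open Polynomial Complex

lemma derivative_finset_prod {ι : Type*} [DecidableEq ι] (s : Finset ι) (f : ι → Polynomial ℂ) :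
    Polynomial.derivative (∏ i ∈ s, f i)
      = ∑ i ∈ s, (∏ j ∈ s.erase i, f j) * Polynomial.derivative (f i) := by
  induction s using Finset.induction_on with
  | empty => simp
  | @insert a s ha ih =>
    rw [Finset.prod_insert ha, Polynomial.derivative_mul, ih, Finset.sum_insert ha,
      Finset.erase_insert ha]
    congr 1
    · ring
    · rw [Finset.mul_sum]
      apply Finset.sum_congr rfl
      intro i hi
      have hia : i ≠ a := fun hh => ha (hh ▸ hi)
      rw [Finset.erase_insert_of_ne hia.symm,
        Finset.prod_insert (fun hmem => ha (Finset.mem_of_mem_erase hmem))]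
      ring

lemma ratio_im_nonpos : ∀ (d : ℕ) (p : Polynomial ℂ), p.natDegree = d → p.eval 0 ≠ 0 →
    (∀ z, p.IsRoot z → z.im < 0) →
    ((Polynomial.derivative p).eval 0 * (p.eval 0)⁻¹).im ≤ 0 := by
  intro d
  induction d using Nat.strong_induction_on with
  | _ d ih =>
    intro p hd h0 hroots
    rcases Nat.eq_zero_or_pos d with hd0 | hdpos
    · subst hd0
      obtain ⟨a, rfl⟩ := Polynomial.natDegree_eq_zero.mp hd
      simp
    · have hdeg : 0 < p.degree :=
        Polynomial.natDegree_pos_iff_degree_pos.mp (by omega)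
      obtain ⟨r, hr⟩ := Complex.exists_root hdeg
      have hrim : r.im < 0 := hroots r hr
      obtain ⟨q, rfl⟩ := Polynomial.dvd_iff_isRoot.mpr hr
      have hq0 : q.eval 0 ≠ 0 := by
        intro hh
        apply h0
        rw [Polynomial.eval_mul, hh, mul_zero]
      have hrne : r ≠ 0 := fun hh => by rw [hh] at hrim; simp at hrim
      have hqne : q ≠ 0 := fun hh => hq0 (by rw [hh]; simp)
      have hXrne : (Polynomial.X - Polynomial.C r) ≠ 0 := Polynomial.X_sub_C_ne_zero r
      have hqdeg : q.natDegree < d := by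
        have h1 := Polynomial.natDegree_mul hXrne hqne
        rw [hd, Polynomial.natDegree_X_sub_C] at h1
        omega
      have hqroots : ∀ z, q.IsRoot z → z.im < 0 := by
        intro z hz
        apply hroots
        rw [Polynomial.IsRoot, Polynomial.eval_mul, hz, mul_zero]
      have hih := ih q.natDegree hqdeg q rfl hq0 hqroots
      have hpe : ((Polynomial.X - Polynomial.C r) * q).eval 0 = (-r) * q.eval 0 := by
        rw [Polynomial.eval_mul]
        simp
      have hde : (Polynomial.derivative ((Polynomial.X - Polynomial.C r) * q)).eval 0
          = q.eval 0 + (-r) * (Polynomial.derivative q).eval 0 := by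
        rw [Polynomial.derivative_mul]
        simp
      have hkey : (Polynomial.derivative ((Polynomial.X - Polynomial.C r) * q)).eval 0 * (((Polynomial.X - Polynomial.C r) * q).eval 0)⁻¹
          = (-r)⁻¹ + (Polynomial.derivative q).eval 0 * (q.eval 0)⁻¹ := by
        have hnr : (-r) ≠ 0 := neg_ne_zero.mpr hrne
        rw [hpe, hde, mul_inv]
        calc (q.eval 0 + -r * (Polynomial.derivative q).eval 0) * ((-r)⁻¹ * (q.eval 0)⁻¹)
            = (q.eval 0 * (q.eval 0)⁻¹) * (-r)⁻¹
              + (-r * (-r)⁻¹) * ((Polynomial.derivative q).eval 0 * (q.eval 0)⁻¹) := by ring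
          _ = (-r)⁻¹ + (Polynomial.derivative q).eval 0 * (q.eval 0)⁻¹ := by
              rw [mul_inv_cancel₀ hq0, mul_inv_cancel₀ hnr, one_mul, one_mul]
      rw [hkey, Complex.add_im]
      have h1 : ((-r)⁻¹).im ≤ 0 := by
        rw [Complex.inv_im]
        simp only [Complex.neg_im, neg_neg]
        apply div_nonpos_of_nonpos_of_nonneg (le_of_lt hrim) (normSq_nonneg _)
      linarith

theorem stab : ∀ (n : ℕ) (x : Fin n → ℂ) (y : ℂ),
    (∀ i, 0 < (x i).im) → 0 < y.im → homEval n x y ≠ 0 := by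
  intro n
  induction n with
  | zero =>
    intro x y _ _
    rw [homEval]
    simp
  | succ n ih =>
    intro x y hx hy
    set x' : Fin n → ℂ := x ∘ castSucc with hx'
    have hx'pos : ∀ i, 0 < (x' i).im := fun i => hx (castSucc i)
    set G : Polynomial ℂ := ∑ σ : Perm (Fin n), ∏ i : Fin n,
        (Polynomial.C (if i < σ i then x' (σ i) else y) + Polynomial.X) with hG
    have hGeval : ∀ t : ℂ, G.eval t = homEval n (fun i => x' i + t) (y + t) := by
      intro t
      rw [hG, Polynomial.eval_finset_sum, homEval]
      apply Finset.sum_congr rfl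
      intro σ _
      rw [Polynomial.eval_prod]
      apply Finset.prod_congr rfl
      intro i _
      rw [Polynomial.eval_add, Polynomial.eval_C, Polynomial.eval_X]
      by_cases h : i < σ i
      · rw [if_pos h, if_pos h]
      · rw [if_neg h, if_neg h]
    have hG0 : G.eval 0 = homEval n x' y := by
      rw [hGeval 0]
      simp [homEval]
    have hGder : (Polynomial.derivative G).eval 0 = brkEval n x' y := by
      rw [hG, Polynomial.derivative_sum, Polynomial.eval_finset_sum, brkEval]
      apply Finset.sum_congr rfl
      intro σ _
      rw [derivative_finset_prod, Polynomial.eval_finset_sum]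
      apply Finset.sum_congr rfl
      intro j _
      rw [Polynomial.eval_mul, Polynomial.eval_prod]
      have hder1 : Polynomial.derivative
          (Polynomial.C (if j < σ j then x' (σ j) else y) + Polynomial.X) = 1 := by
        rw [Polynomial.derivative_add, Polynomial.derivative_C, Polynomial.derivative_X,
          zero_add]
      rw [hder1, Polynomial.eval_one, mul_one]
      apply Finset.prod_congr rfl
      intro i _
      rw [Polynomial.eval_add, Polynomial.eval_C, Polynomial.eval_X, add_zero]
    have hH : homEval n x' y ≠ 0 := ih x' y hx'pos hy
    rw [homEval_rec]
    intro hcontra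
    have hy0 : y ≠ 0 := fun h => by rw [h] at hy; simp at hy
    have h2 : homEval n x' y + x (last n) * brkEval n x' y = 0 := by
      have h3 : y * (homEval n x' y + x (last n) * brkEval n x' y) = 0 := by
        linear_combination hcontra
      exact (mul_eq_zero.mp h3).resolve_left hy0
    have hB : brkEval n x' y ≠ 0 := by
      intro h
      rw [h, mul_zero, add_zero] at h2
      exact hH h2
    have hroots : ∀ z, G.IsRoot z → z.im < 0 := by
      intro z hz
      by_contra hge
      push_neg at hge
      apply ih (fun i => x' i + z) (y + z)
        (fun i => by rw [Complex.add_im]; linarith [hx'pos i])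
        (by rw [Complex.add_im]; linarith)
      rw [← hGeval]
      exact hz
    have hip : ((Polynomial.derivative G).eval 0 * (G.eval 0)⁻¹).im ≤ 0 :=
      ratio_im_nonpos G.natDegree G rfl (by rw [hG0]; exact hH) hroots
    rw [hGder, hG0] at hip
    set zr : ℂ := brkEval n x' y * (homEval n x' y)⁻¹ with hzr
    have hzrne : zr ≠ 0 := mul_ne_zero hB (inv_ne_zero hH)
    have h4 : x (last n) * brkEval n x' y = - homEval n x' y := by
      linear_combination h2
    have hxl : x (last n) = -(homEval n x' y * (brkEval n x' y)⁻¹) := by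
      have h5 := congrArg (fun z => z * (brkEval n x' y)⁻¹) h4
      rw [mul_assoc, mul_inv_cancel₀ hB, mul_one] at h5
      rw [h5]
      ring
    have hxl2 : x (last n) = - zr⁻¹ := by
      rw [hzr, mul_inv, inv_inv, hxl]
      ring
    have hfin : (x (last n)).im ≤ 0 := by
      rw [hxl2, Complex.neg_im, Complex.inv_im]
      have : (zr⁻¹).im = - zr.im / normSq zr := Complex.inv_im zr
      rw [show -(-zr.im / normSq zr) = zr.im / normSq zr by ring]
      exact div_nonpos_of_nonpos_of_nonneg hip (normSq_nonneg _)
    linarith [hx (last n)]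

lemma homEval_smul (n : ℕ) (x : Fin n → ℂ) (y u : ℂ) :
    homEval n (fun i => u * x i) (u * y) = u ^ n * homEval n x y := by
  rw [homEval, homEval, Finset.mul_sum]
  apply Finset.sum_congr rfl
  intro σ _
  have h1 : ∀ i : Fin n, (if i < σ i then u * x (σ i) else u * y)
      = u * (if i < σ i then x (σ i) else y) := by
    intro i
    by_cases h : i < σ i
    · rw [if_pos h, if_pos h]
    · rw [if_neg h, if_neg h]
  rw [Finset.prod_congr rfl (fun i _ => h1 i), Finset.prod_mul_distrib,
    Finset.prod_const, Finset.card_univ, Fintype.card_fin]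

theorem excC_ne_zero (n : ℕ) (w : Fin n → ℂ) (hw : ∀ i, 0 < (w i).im) :
    homEval n w 1 ≠ 0 := by
  cases n with
  | zero =>
    rw [homEval]
    simp
  | succ m =>
    set ε : ℝ := (univ : Finset (Fin (m + 1))).inf' univ_nonempty
      (fun i => (w i).im / (2 * (1 + |(w i).re|))) with hε
    have hεpos : 0 < ε := by
      rw [hε, Finset.lt_inf'_iff]
      intro i _
      have := hw i
      positivity
    have key : ∀ i : Fin (m + 1), 0 < (w i).im + ε * (w i).re := by
      intro i
      have h1 : ε ≤ (w i).im / (2 * (1 + |(w i).re|)) :=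
        Finset.inf'_le _ (mem_univ i)
      have habs : (0:ℝ) ≤ |(w i).re| := abs_nonneg _
      have him := hw i
      have h2 : ε * |(w i).re| ≤ ((w i).im / (2 * (1 + |(w i).re|))) * |(w i).re| :=
        mul_le_mul_of_nonneg_right h1 habs
      have h3 : ((w i).im / (2 * (1 + |(w i).re|))) * |(w i).re| < (w i).im := by
        rw [div_mul_eq_mul_div, div_lt_iff₀ (by positivity)]
        nlinarith
      have h4 : -(ε * |(w i).re|) ≤ ε * (w i).re := by
        nlinarith [neg_abs_le ((w i).re)]
      linarith
    set u : ℂ := 1 + (ε : ℝ) * Complex.I with hu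
    have hu_im : 0 < u.im := by
      rw [hu]
      simp [Complex.add_im, Complex.mul_im]
      exact hεpos
    have hcoord : ∀ i, 0 < ((fun i => u * w i) i).im := by
      intro i
      simp only [Complex.mul_im, hu]
      have hre : u.re = 1 := by simp [hu]
      have him' : u.im = ε := by simp [hu]
      rw [hre, him', one_mul]
      have := key i
      linarith
    have hne := stab (m + 1) (fun i => u * w i) (u * 1) hcoord (by rwa [mul_one])
    intro hcontra
    apply hne
    rw [homEval_smul, hcontra, mul_zero]

end analytic


/-! ### glue to the polynomial statements -/

section glue

lemma eval_excForm {R : Type*} [CommRing R] (n : ℕ) (x : Fin n → R) :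
    MvPolynomial.eval x (∑ σ : Perm (Fin n),
        ∏ i ∈ univ.filter (fun i : Fin n => i < σ i),
          (MvPolynomial.X (σ i) : MvPolynomial (Fin n) R))
      = homEval n x 1 := by
  rw [map_sum, homEval]
  apply Finset.sum_congr rfl
  intro σ _
  rw [map_prod, Finset.prod_filter]
  apply Finset.prod_congr rfl
  intro i _
  by_cases h : i < σ i
  · rw [if_pos h, if_pos h, MvPolynomial.eval_X]
  · rw [if_neg h, if_neg h]

lemma map_exc (n : ℕ) :
    MvPolynomial.map (algebraMap ℝ ℂ) (mvEulerianExc n)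
      = ∑ σ : Perm (Fin n), ∏ i ∈ univ.filter (fun i : Fin n => i < σ i),
          (MvPolynomial.X (σ i) : MvPolynomial (Fin n) ℂ) := by
  rw [mvEulerianExc, map_sum]
  apply Finset.sum_congr rfl
  intro σ _
  rw [map_prod]
  apply Finset.prod_congr rfl
  intro i _
  rw [MvPolynomial.map_X]

lemma eval_exc (n : ℕ) (x : Fin n → ℝ) :
    MvPolynomial.eval x (mvEulerianExc n) = homEval n x 1 :=
  eval_excForm n x

lemma eval_des (n : ℕ) (x : Fin n → ℝ) :
    MvPolynomial.eval x (mvEulerianDes n) = desEval n x := by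
  rw [mvEulerianDes, map_sum, desEval]
  apply Finset.sum_congr rfl
  intro σ _
  rw [map_prod]
  apply Finset.prod_congr rfl
  intro i _
  by_cases h : (i : ℕ) + 1 < n
  · rw [dif_pos h]
    by_cases h2 : σ ⟨(i : ℕ) + 1, h⟩ < σ i
    · have hd : dscAt σ i := ⟨h, h2⟩
      rw [if_pos h2, if_pos hd, MvPolynomial.eval_X]
    · rw [if_neg h2, if_neg (fun hd => h2 ((dscAt_iff σ i h).mp hd)), map_one]
  · rw [dif_neg h, if_neg (dscAt_false σ i h), map_one]

end glue

end MvEulerianAux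

open MvEulerianAux in
/-- The multivariate Eulerian polynomial (over excedances) is real stable, and
it coincides with the sum over permutations of the product of the
descent-top variables. -/
theorem mvEulerian_stable_and_eq (n : ℕ) :
    RealStable (mvEulerianExc n) ∧ mvEulerianExc n = mvEulerianDes n := by
  have heq : mvEulerianExc n = mvEulerianDes n := by
    apply MvPolynomial.funext
    intro x
    rw [eval_exc, eval_des, exc_eq_des]
  refine ⟨?_, heq⟩
  rw [RealStable, IsStable]
  right
  intro w hw
  have h1 : MvPolynomial.eval w (MvPolynomial.map (algebraMap ℝ ℂ) (mvEulerianExc n))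
      = homEval n w 1 := by
    rw [map_exc]
    exact eval_excForm n w
  rw [h1]
  exact excC_ne_zero n w hw
end
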